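/- Strong duality for the Schmüdgen-type hierarchy of the discrete Gromov-Wasserstein problem: for every positive integer r, lb(L, T(Π(μ,ν)))_r = val(S-DGW-r). -/

import Mathlib

open MvPolynomial

/-- The Riesz functional associated to a moment sequence `z`. -/
noncomputable def riesz {σ : Type*} (z : (σ →₀ ℕ) → ℝ) (p : MvPolynomial σ ℝ) : ℝ :=
  ∑ α ∈ p.support, MvPolynomial.coeff α p * z α

/-- The total degree (length) of a multi-index. -/
def mdeg {σ : Type*} (α : σ →₀ ℕ) : ℕ := α.sum fun _ e => e

/-- Positive semidefiniteness of the truncated localizing matrix `M_t(g z)`: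
the associated quadratic form is nonnegative on coefficient vectors of
polynomials of degree at most `t`. -/
def locPSD {σ : Type*} (z : (σ →₀ ℕ) → ℝ) (g : MvPolynomial σ ℝ) (t : ℕ) : Prop :=
  ∀ p : MvPolynomial σ ℝ, p.totalDegree ≤ t → 0 ≤ riesz z (g * p ^ 2)

/-- Vanishing of the truncated localizing matrix `M_t(g z)`: all entries are zero. -/
def locZero {σ : Type*} (z : (σ →₀ ℕ) → ℝ) (g : MvPolynomial σ ℝ) (t : ℕ) : Prop :=
  ∀ α β : σ →₀ ℕ, mdeg α ≤ t → mdeg β ≤ t →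
    riesz z (g * monomial α 1 * monomial β 1) = 0

/-- The row-marginal polynomial `r_i(π) = ∑_j π_{ij} - μ_i`. -/
noncomputable def rowPoly (a b : ℕ) (μ : Fin a → ℝ) (i : Fin a) :
    MvPolynomial (Fin a × Fin b) ℝ :=
  (∑ j, X (i, j)) - C (μ i)

/-- The column-marginal polynomial `c_j(π) = ∑_i π_{ij} - ν_j`. -/
noncomputable def colPoly (a b : ℕ) (ν : Fin b → ℝ) (j : Fin b) :
    MvPolynomial (Fin a × Fin b) ℝ :=
  (∑ i, X (i, j)) - C (ν j)

/-- The monomial `e_I = ∏_{(i,j) ∈ I} π_{ij}`. -/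
noncomputable def eI {a b : ℕ} (I : Finset (Fin a × Fin b)) : MvPolynomial (Fin a × Fin b) ℝ :=
  ∏ q ∈ I, X q

/-- A probability vector: nonnegative entries summing to 1. -/
def IsProbVec {a : ℕ} (μ : Fin a → ℝ) : Prop := (∀ i, 0 ≤ μ i) ∧ ∑ i, μ i = 1

/-- Feasibility for the level-`r` Schmüdgen moment relaxation (S-DGW-r). -/
def SFeas (a b r : ℕ) (μ : Fin a → ℝ) (ν : Fin b → ℝ)
    (z : ((Fin a × Fin b) →₀ ℕ) → ℝ) : Prop :=
  z 0 = 1 ∧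
  (∀ I : Finset (Fin a × Fin b), I.card ≤ 2 * r → locPSD z (eI I) (r - (I.card + 1) / 2)) ∧
  (∀ i, locZero z (rowPoly a b μ i) (r - 1)) ∧
  (∀ j, locZero z (colPoly a b ν j) (r - 1)) ∧
  (∀ i₁ i₂ : Fin a, ∀ j : Fin b, locZero z (rowPoly a b μ i₁ * X (i₂, j)) (r - 1)) ∧
  (∀ j₁ j₂ : Fin b, ∀ i : Fin a, locZero z (colPoly a b ν j₁ * X (i, j₂)) (r - 1))

/-- The objective of the Schmüdgen moment relaxation. -/
noncomputable def objS (a b : ℕ) (L : Fin a → Fin b → Fin a → Fin b → ℝ)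
    (z : ((Fin a × Fin b) →₀ ℕ) → ℝ) : ℝ :=
  ∑ i, ∑ j, ∑ k, ∑ l, L i j k l * z (Finsupp.single (i, j) 1 + Finsupp.single (k, l) 1)

/-- The optimal value of the level-`r` Schmüdgen moment relaxation. -/
noncomputable def valS (a b r : ℕ) (μ : Fin a → ℝ) (ν : Fin b → ℝ)
    (L : Fin a → Fin b → Fin a → Fin b → ℝ) : ℝ :=
  sInf {v : ℝ | ∃ z, SFeas a b r μ ν z ∧ v = objS a b L z}

/-- A polynomial is SOS if it is a finite sum of squares of polynomials. -/
def IsSOS {σ : Type*} (p : MvPolynomial σ ℝ) : Prop :=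
  ∃ (k : ℕ) (q : Fin k → MvPolynomial σ ℝ), p = ∑ i, q i ^ 2

/-- Membership in the truncated preordering `T(Π(μ,ν))_{2r}`. -/
def InPreT (a b r : ℕ) (μ : Fin a → ℝ) (ν : Fin b → ℝ)
    (f : MvPolynomial (Fin a × Fin b) ℝ) : Prop :=
  ∃ (σ0 : MvPolynomial (Fin a × Fin b) ℝ)
    (σI : Finset (Fin a × Fin b) → MvPolynomial (Fin a × Fin b) ℝ)
    (lam : Fin a → MvPolynomial (Fin a × Fin b) ℝ)
    (th : Fin b → MvPolynomial (Fin a × Fin b) ℝ),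
    IsSOS σ0 ∧ σ0.totalDegree ≤ 2 * r ∧
    (∀ I, IsSOS (σI I) ∧ (eI I * σI I).totalDegree ≤ 2 * r) ∧
    (∀ i, (lam i).totalDegree ≤ 2 * r - 1) ∧
    (∀ j, (th j).totalDegree ≤ 2 * r - 1) ∧
    f = σ0 + ∑ I : Finset (Fin a × Fin b), eI I * σI I
        + ∑ i, lam i * rowPoly a b μ i + ∑ j, th j * colPoly a b ν j

/-- The GW cost as a quadratic polynomial in the variables `π_{ij}`. -/
noncomputable def Lpoly (a b : ℕ) (L : Fin a → Fin b → Fin a → Fin b → ℝ) :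
    MvPolynomial (Fin a × Fin b) ℝ :=
  ∑ i, ∑ j, ∑ k, ∑ l, C (L i j k l) * X (i, j) * X (k, l)

/-- The Schmüdgen SOS lower bound `lb(L, T(Π(μ,ν)))_r`. -/
noncomputable def lbS (a b r : ℕ) (μ : Fin a → ℝ) (ν : Fin b → ℝ)
    (L : Fin a → Fin b → Fin a → Fin b → ℝ) : ℝ :=
  sSup {c : ℝ | InPreT a b r μ ν (Lpoly a b L - C c)}

-- basic mdeg lemmas
lemma mdeg_eq_degree {σ : Type*} (α : σ →₀ ℕ) : mdeg α = α.degree := by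
  rw [mdeg, Finsupp.degree, Finsupp.sum]; rfl

lemma mdeg_add {σ : Type*} (α β : σ →₀ ℕ) : mdeg (α + β) = mdeg α + mdeg β := by
  classical
  simp [mdeg, Finsupp.sum_add_index']

@[simp] lemma mdeg_zero {σ : Type*} : mdeg (0 : σ →₀ ℕ) = 0 := by simp [mdeg]

@[simp] lemma mdeg_single {σ : Type*} (q : σ) (k : ℕ) : mdeg (Finsupp.single q k) = k := by
  simp [mdeg, Finsupp.sum_single_index]

lemma mdeg_eq_zero_iff {σ : Type*} (α : σ →₀ ℕ) : mdeg α = 0 ↔ α = 0 := by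
  rw [mdeg_eq_degree]; exact Finsupp.degree_eq_zero_iff α

-- riesz basics
lemma riesz_eq_sum_of_subset {σ : Type*} (z : (σ →₀ ℕ) → ℝ) (p : MvPolynomial σ ℝ)
    {T : Finset (σ →₀ ℕ)} (h : p.support ⊆ T) :
    riesz z p = ∑ α ∈ T, MvPolynomial.coeff α p * z α := by
  rw [riesz]
  refine Finset.sum_subset h ?_
  intro x _ hx
  rw [MvPolynomial.notMem_support_iff.mp hx, zero_mul]

lemma riesz_add {σ : Type*} (z : (σ →₀ ℕ) → ℝ) (p q : MvPolynomial σ ℝ) :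
    riesz z (p + q) = riesz z p + riesz z q := by
  classical
  rw [riesz_eq_sum_of_subset z (p+q) (T := p.support ∪ q.support)
      (MvPolynomial.support_add),
    riesz_eq_sum_of_subset z p (T := p.support ∪ q.support) Finset.subset_union_left,
    riesz_eq_sum_of_subset z q (T := p.support ∪ q.support) Finset.subset_union_right,
    ← Finset.sum_add_distrib]
  refine Finset.sum_congr rfl fun α _ => ?_
  rw [MvPolynomial.coeff_add]; ring

lemma riesz_smul {σ : Type*} (z : (σ →₀ ℕ) → ℝ) (c : ℝ) (p : MvPolynomial σ ℝ) :
    riesz z (c • p) = c * riesz z p := by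
  classical
  rw [riesz_eq_sum_of_subset z (c • p) (T := p.support) (MvPolynomial.support_smul),
    riesz, Finset.mul_sum]
  refine Finset.sum_congr rfl fun α _ => ?_
  rw [MvPolynomial.coeff_smul]; simp; ring

noncomputable def rieszL {σ : Type*} (z : (σ →₀ ℕ) → ℝ) : MvPolynomial σ ℝ →ₗ[ℝ] ℝ where
  toFun := riesz z
  map_add' := riesz_add z
  map_smul' := by intro c p; simp [riesz_smul]

@[simp] lemma rieszL_apply {σ : Type*} (z : (σ →₀ ℕ) → ℝ) (p : MvPolynomial σ ℝ) :
    rieszL z p = riesz z p := rfl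

@[simp] lemma riesz_zero {σ : Type*} (z : (σ →₀ ℕ) → ℝ) : riesz z 0 = 0 := by
  simp [riesz]

lemma riesz_sum {σ ι : Type*} (z : (σ →₀ ℕ) → ℝ) (s : Finset ι) (f : ι → MvPolynomial σ ℝ) :
    riesz z (∑ i ∈ s, f i) = ∑ i ∈ s, riesz z (f i) := by
  have := map_sum (rieszL z) f s
  simpa only [rieszL_apply] using this

lemma riesz_sub {σ : Type*} (z : (σ →₀ ℕ) → ℝ) (p q : MvPolynomial σ ℝ) :
    riesz z (p - q) = riesz z p - riesz z q := by
  simpa using map_sub (rieszL z) p q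

lemma riesz_monomial {σ : Type*} (z : (σ →₀ ℕ) → ℝ) (α : σ →₀ ℕ) (c : ℝ) :
    riesz z (monomial α c) = c * z α := by
  classical
  rw [riesz_eq_sum_of_subset z _ (T := {α}) MvPolynomial.support_monomial_subset]
  simp [MvPolynomial.coeff_monomial]

lemma riesz_C {σ : Type*} (z : (σ →₀ ℕ) → ℝ) (c : ℝ) : riesz z (C c) = c * z 0 := by
  rw [MvPolynomial.C_apply, riesz_monomial]

lemma riesz_X {σ : Type*} (z : (σ →₀ ℕ) → ℝ) (q : σ) :
    riesz z (X q) = z (Finsupp.single q 1) := by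
  rw [MvPolynomial.X, riesz_monomial, one_mul]

lemma riesz_X_mul_X {σ : Type*} (z : (σ →₀ ℕ) → ℝ) (q q' : σ) :
    riesz z (X q * X q') = z (Finsupp.single q 1 + Finsupp.single q' 1) := by
  rw [MvPolynomial.X, MvPolynomial.X, MvPolynomial.monomial_mul, riesz_monomial]
  norm_num

lemma riesz_scale {σ : Type*} (z : (σ →₀ ℕ) → ℝ) (c : ℝ) (p : MvPolynomial σ ℝ) :
    riesz (fun α => c * z α) p = c * riesz z p := by
  rw [riesz, riesz, Finset.mul_sum]
  exact Finset.sum_congr rfl fun α _ => by ring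

section splitting
variable {σ : Type*}

lemma exists_single_add (γ : σ →₀ ℕ) (h : γ ≠ 0) :
    ∃ (q : σ) (γ' : σ →₀ ℕ), γ = Finsupp.single q 1 + γ' ∧ mdeg γ' = mdeg γ - 1 := by
  classical
  obtain ⟨q, hq⟩ : ∃ q, γ q ≠ 0 := by
    by_contra hc
    push_neg at hc
    exact h (Finsupp.ext hc)
  have h1 : γ = Finsupp.single q 1 + (γ - Finsupp.single q 1) := by
    ext a
    simp only [Finsupp.add_apply, Finsupp.tsub_apply, Finsupp.single_apply]
    by_cases ha : q = a
    · subst ha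
      simp only [if_true]
      omega
    · simp only [if_neg ha]
      omega
  refine ⟨q, γ - Finsupp.single q 1, h1, ?_⟩
  have := congrArg mdeg h1
  rw [mdeg_add, mdeg_single] at this
  omega

lemma exists_split : ∀ (k : ℕ) (α : σ →₀ ℕ), k ≤ mdeg α →
    ∃ β γ, α = β + γ ∧ mdeg β = k ∧ mdeg γ = mdeg α - k := by
  intro k
  induction k with
  | zero => intro α _; exact ⟨0, α, by simp, by simp, by simp⟩
  | succ k ih =>
    intro α hk
    obtain ⟨β, γ, hαβγ, hβ, hγ⟩ := ih α (Nat.le_of_succ_le hk)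
    have hγ1 : γ ≠ 0 := by
      intro h0
      rw [h0] at hγ
      have := congrArg mdeg hαβγ
      rw [mdeg_add, h0] at this
      simp at this
      omega
    obtain ⟨q, γ', hγeq, hγ'⟩ := exists_single_add γ hγ1
    refine ⟨β + Finsupp.single q 1, γ', ?_, ?_, ?_⟩
    · rw [hαβγ, hγeq]; abel
    · rw [mdeg_add, hβ, mdeg_single]
    · have := congrArg mdeg hαβγ
      rw [mdeg_add] at this
      omega

lemma mdeg_one_eq_single {β : σ →₀ ℕ} (h : mdeg β = 1) : ∃ q, β = Finsupp.single q 1 := by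
  have hβ : β ≠ 0 := by
    intro h0; rw [h0] at h; simp at h
  obtain ⟨q, γ', heq, hγ'⟩ := exists_single_add β hβ
  rw [h] at hγ'
  simp only [Nat.sub_self] at hγ'
  refine ⟨q, ?_⟩
  rw [heq, (mdeg_eq_zero_iff γ').mp hγ', add_zero]

/-- Splitting of a multi-index of degree ≤ 2r-1. -/
lemma split_low {r : ℕ} (hr : 0 < r) (α : σ →₀ ℕ) (h : mdeg α ≤ 2 * r - 2) :
    ∃ β γ, α = β + γ ∧ mdeg β ≤ r - 1 ∧ mdeg γ ≤ r - 1 := by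
  obtain ⟨β, γ, h1, h2, h3⟩ := exists_split (min (r-1) (mdeg α)) α (Nat.min_le_right _ _)
  exact ⟨β, γ, h1, by omega, by omega⟩

lemma split_high {r : ℕ} (hr : 0 < r) (α : σ →₀ ℕ) (h : mdeg α = 2 * r - 1) :
    ∃ (q : σ) (β γ : σ →₀ ℕ), α = Finsupp.single q 1 + β + γ ∧
      mdeg β ≤ r - 1 ∧ mdeg γ ≤ r - 1 := by
  obtain ⟨β0, γ0, h1, h2, h3⟩ := exists_split 1 α (by omega)
  obtain ⟨q, hq⟩ := mdeg_one_eq_single h2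
  obtain ⟨β, γ, h4, h5, h6⟩ := split_low hr γ0 (by omega)
  exact ⟨q, β, γ, by rw [h1, hq, h4, add_assoc], h5, h6⟩

end splitting

section homog
variable {σ : Type*}

lemma degree_add' (α β : σ →₀ ℕ) : (α + β).degree = α.degree + β.degree := by
  rw [← mdeg_eq_degree, ← mdeg_eq_degree, ← mdeg_eq_degree, mdeg_add]

lemma coeff_zero_of_totalDegree_lt {p : MvPolynomial σ ℝ} {d : σ →₀ ℕ}
    (h : p.totalDegree < d.degree) : MvPolynomial.coeff d p = 0 :=
  MvPolynomial.coeff_eq_zero_of_totalDegree_lt h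

lemma mem_support_degree_le {p : MvPolynomial σ ℝ} {d : σ →₀ ℕ}
    (h : d ∈ p.support) : d.degree ≤ p.totalDegree := by
  rw [← mdeg_eq_degree]
  exact MvPolynomial.le_totalDegree h

open MvPolynomial in
lemma homogeneousComponent_mul_top (p q : MvPolynomial σ ℝ) (a b : ℕ)
    (hp : p.totalDegree ≤ a) (hq : q.totalDegree ≤ b) :
    homogeneousComponent (a + b) (p * q)
      = homogeneousComponent a p * homogeneousComponent b q := by
  classical
  ext d
  rw [coeff_homogeneousComponent, coeff_mul, coeff_mul]
  by_cases hd : d.degree = a + b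
  · rw [if_pos hd]
    refine Finset.sum_congr rfl fun x hx => ?_
    have hsum : x.1.degree + x.2.degree = a + b := by
      rw [← degree_add', (Finset.HasAntidiagonal.mem_antidiagonal.mp hx), hd]
    rw [coeff_homogeneousComponent, coeff_homogeneousComponent]
    by_cases h1 : x.1.degree = a
    · rw [if_pos h1, if_pos (by omega : x.2.degree = b)]
    · rw [if_neg h1]
      rcases Nat.lt_or_ge x.1.degree a with hlt | hge
      · have h2 : b < x.2.degree := by omega
        rw [coeff_zero_of_totalDegree_lt (lt_of_le_of_lt hq h2)]
        ring
      · have h2 : a < x.1.degree := by omega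
        rw [coeff_zero_of_totalDegree_lt (lt_of_le_of_lt hp h2)]
        ring
  · rw [if_neg hd]
    refine (Finset.sum_eq_zero fun x hx => ?_).symm
    have hsum : x.1.degree + x.2.degree = d.degree := by
      rw [← degree_add', (Finset.HasAntidiagonal.mem_antidiagonal.mp hx)]
    rw [coeff_homogeneousComponent, coeff_homogeneousComponent]
    by_cases h1 : x.1.degree = a
    · rw [if_neg (by omega : ¬ x.2.degree = b), mul_zero]
    · rw [if_neg h1, zero_mul]

open MvPolynomial in
lemma homogeneousComponent_monomial_self (g : σ →₀ ℕ) (c : ℝ) :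
    homogeneousComponent g.degree (monomial g c) = monomial g c := by
  classical
  ext d
  rw [coeff_homogeneousComponent, coeff_monomial]
  by_cases h : g = d
  · subst h; simp
  · simp only [if_neg h]
    simp

open MvPolynomial in
lemma topComponent_ne_zero {p : MvPolynomial σ ℝ} (h : p ≠ 0) :
    homogeneousComponent p.totalDegree p ≠ 0 := by
  classical
  have hsupp : p.support.Nonempty := by
    rw [Finset.nonempty_iff_ne_empty, Ne, MvPolynomial.support_eq_empty]
    exact h
  obtain ⟨d, hd, hsup⟩ := Finset.exists_mem_eq_sup p.support hsupp
    (fun s => s.sum fun _ e => e)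
  intro hc
  have : MvPolynomial.coeff d (homogeneousComponent p.totalDegree p) = 0 := by
    rw [hc]; simp
  rw [coeff_homogeneousComponent] at this
  have hdeg : d.degree = p.totalDegree := by
    rw [← mdeg_eq_degree, MvPolynomial.totalDegree, hsup]
    rfl
  rw [if_pos hdeg] at this
  exact (MvPolynomial.mem_support_iff.mp hd) this

open MvPolynomial in
lemma sos_eq_zero {k : ℕ} {q : Fin k → MvPolynomial σ ℝ}
    (h : ∑ i, q i ^ 2 = 0) : ∀ i, q i = 0 := by
  intro i
  apply MvPolynomial.funext
  intro x
  have hx : ∑ j, (eval x (q j)) ^ 2 = 0 := by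
    have := congrArg (eval x) h
    simpa using this
  have hev : (eval x (q i)) ^ 2 = 0 := by
    have := (Finset.sum_eq_zero_iff_of_nonneg
      (fun j _ => sq_nonneg (eval x (q j)))).mp hx i (Finset.mem_univ i)
    exact this
  have := pow_eq_zero_iff (n := 2) (by norm_num) |>.mp hev
  simpa using this

open MvPolynomial in
lemma deg_bound_of_monomial_mul_sos (g : σ →₀ ℕ) {k : ℕ} (q : Fin k → MvPolynomial σ ℝ)
    {D2 : ℕ} (h : ((monomial g (1:ℝ)) * ∑ i, q i ^ 2).totalDegree ≤ D2)
    (hne : ∃ i, q i ≠ 0) :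
    g.degree + 2 * (Finset.univ.sup fun i => (q i).totalDegree) ≤ D2 := by
  classical
  set D := Finset.univ.sup fun i => (q i).totalDegree with hD
  -- find a nonzero q i of maximal degree
  obtain ⟨i0, hi0⟩ := hne
  have hfilter : (Finset.univ.filter fun i => q i ≠ 0).Nonempty :=
    ⟨i0, by simp [hi0]⟩
  obtain ⟨t, ht, htsup⟩ := Finset.exists_mem_eq_sup _ hfilter
    (fun i => (q i).totalDegree)
  have htne : q t ≠ 0 := (Finset.mem_filter.mp ht).2
  have htD : (q t).totalDegree = D := by
    refine le_antisymm (Finset.le_sup (f := fun i => (q i).totalDegree) (Finset.mem_univ t)) ?_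
    rw [hD, ← htsup]
    apply Finset.sup_le
    intro i _
    by_cases hqi : q i = 0
    · simp [hqi]
    · exact Finset.le_sup (f := fun i => (q i).totalDegree)
        (Finset.mem_filter.mpr ⟨Finset.mem_univ i, hqi⟩)
  -- top components
  set h' : Fin k → MvPolynomial σ ℝ := fun i => homogeneousComponent D (q i) with hh'
  have hS : homogeneousComponent (g.degree + 2 * D) ((monomial g (1:ℝ)) * ∑ i, q i ^ 2)
      = (monomial g (1:ℝ)) * ∑ i, (h' i) ^ 2 := by
    have h1 : (∑ i, q i ^ 2).totalDegree ≤ 2 * D := by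
      refine le_trans (totalDegree_finset_sum _ _) ?_
      apply Finset.sup_le
      intro i _
      refine le_trans (totalDegree_pow _ _) ?_
      have : (q i).totalDegree ≤ D := Finset.le_sup (f := fun i => (q i).totalDegree) (Finset.mem_univ i)
      omega
    have h2 := homogeneousComponent_mul_top (monomial g (1:ℝ)) (∑ i, q i ^ 2)
      g.degree (2 * D) (le_of_eq (by rw [totalDegree_monomial _ one_ne_zero]; exact mdeg_eq_degree g))
      h1
    rw [h2, homogeneousComponent_monomial_self]
    congr 1
    rw [map_sum]
    refine Finset.sum_congr rfl fun i _ => ?_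
    have hqi : (q i).totalDegree ≤ D := Finset.le_sup (f := fun i => (q i).totalDegree) (Finset.mem_univ i)
    have := homogeneousComponent_mul_top (q i) (q i) D D hqi hqi
    rw [pow_two, pow_two]
    rw [show D + D = 2 * D by ring] at this
    exact this
  have hSne : (∑ i, (h' i) ^ 2) ≠ 0 := by
    intro hc
    have := sos_eq_zero hc t
    rw [hh'] at this
    simp only at this
    rw [← htD] at this
    exact topComponent_ne_zero htne this
  have hmono : (monomial g (1:ℝ)) ≠ 0 := by
    rw [Ne, MvPolynomial.monomial_eq_zero]
    exact one_ne_zero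
  have hprod : (monomial g (1:ℝ)) * ∑ i, (h' i) ^ 2 ≠ 0 := mul_ne_zero hmono hSne
  by_contra hcon
  push_neg at hcon
  have : ((monomial g (1:ℝ)) * ∑ i, q i ^ 2).totalDegree < g.degree + 2 * D := by omega
  have := MvPolynomial.homogeneousComponent_eq_zero _ _ this
  rw [hS] at this
  exact hprod this

end homog

section sosbasic
variable {σ : Type*}
open MvPolynomial

lemma totalDegree_sub_le (p q : MvPolynomial σ ℝ) :
    (p - q).totalDegree ≤ max p.totalDegree q.totalDegree := by
  rw [sub_eq_add_neg]
  refine le_trans (totalDegree_add p (-q)) ?_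
  rw [totalDegree_neg]

lemma deg_monomial_le (d : σ →₀ ℕ) (c : ℝ) : (monomial d c).totalDegree ≤ d.degree := by
  by_cases hc : c = 0
  · subst hc
    rw [monomial_zero]
    simp
  · rw [totalDegree_monomial _ hc, ← mdeg_eq_degree]
    rfl

lemma IsSOS_zero : IsSOS (0 : MvPolynomial σ ℝ) := ⟨0, fun i => 0, by simp⟩

lemma IsSOS_sq (p : MvPolynomial σ ℝ) : IsSOS (p ^ 2) := ⟨1, fun _ => p, by simp⟩

lemma IsSOS_one : IsSOS (1 : MvPolynomial σ ℝ) := by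
  have := IsSOS_sq (1 : MvPolynomial σ ℝ)
  simpa using this

lemma IsSOS_add {p q : MvPolynomial σ ℝ} (hp : IsSOS p) (hq : IsSOS q) : IsSOS (p + q) := by
  obtain ⟨k, u, hu⟩ := hp
  obtain ⟨l, v, hv⟩ := hq
  refine ⟨k + l, Fin.append u v, ?_⟩
  rw [hu, hv, Fin.sum_univ_add]
  congr 1
  · exact Finset.sum_congr rfl fun i _ => by rw [Fin.append_left]
  · exact Finset.sum_congr rfl fun i _ => by rw [Fin.append_right]

lemma IsSOS_Cmul {c : ℝ} (hc : 0 ≤ c) {p : MvPolynomial σ ℝ} (hp : IsSOS p) :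
    IsSOS (C c * p) := by
  obtain ⟨k, u, hu⟩ := hp
  refine ⟨k, fun i => C (Real.sqrt c) * u i, ?_⟩
  rw [hu, Finset.mul_sum]
  refine Finset.sum_congr rfl fun i _ => ?_
  rw [mul_pow, ← map_pow, Real.sq_sqrt hc]

lemma IsSOS_C {c : ℝ} (hc : 0 ≤ c) : IsSOS (C c : MvPolynomial σ ℝ) := by
  have := IsSOS_Cmul hc (IsSOS_one (σ := σ))
  simpa using this

lemma IsSOS_sum_sq {ι : Type*} (s : Finset ι) (f : ι → MvPolynomial σ ℝ) :
    IsSOS (∑ x ∈ s, (f x) ^ 2) := by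
  classical
  refine Finset.sum_induction _ IsSOS (fun u v hu hv => IsSOS_add hu hv) IsSOS_zero
    (fun x _ => IsSOS_sq (f x))

end sosbasic

section eIlem
variable {a b : ℕ}
open MvPolynomial

lemma eI_eq_monomial (I : Finset (Fin a × Fin b)) :
    eI I = monomial (∑ q ∈ I, Finsupp.single q 1) (1 : ℝ) := by
  classical
  induction I using Finset.induction_on with
  | empty => simp [eI, MvPolynomial.monomial_zero', MvPolynomial.C_1]
  | @insert q I hq ih =>
    rw [eI, Finset.prod_insert hq, ← eI, ih, Finset.sum_insert hq,
      MvPolynomial.X, monomial_mul, one_mul]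

lemma degree_eIindex (I : Finset (Fin a × Fin b)) :
    (∑ q ∈ I, Finsupp.single q (1:ℕ)).degree = I.card := by
  classical
  induction I using Finset.induction_on with
  | empty => simp
  | @insert q I hq ih =>
    rw [Finset.sum_insert hq, ← mdeg_eq_degree, mdeg_add, mdeg_single,
      mdeg_eq_degree, ih, Finset.card_insert_of_notMem hq]
    omega

lemma eI_empty : eI (∅ : Finset (Fin a × Fin b)) = 1 := by
  simp [eI]

lemma eI_singleton (q : Fin a × Fin b) : eI {q} = X q := by
  simp [eI]

lemma eI_pair {q q' : Fin a × Fin b} (h : q ≠ q') : eI {q, q'} = X q * X q' := by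
  classical
  rw [eI, Finset.prod_pair h]

lemma eI_totalDegree (I : Finset (Fin a × Fin b)) : (eI I).totalDegree = I.card := by
  rw [eI_eq_monomial, totalDegree_monomial _ (one_ne_zero)]
  have := degree_eIindex I
  rw [← mdeg_eq_degree] at this
  exact this

end eIlem

section preT
open MvPolynomial
variable {a b r : ℕ} {μ : Fin a → ℝ} {ν : Fin b → ℝ}

lemma InPreT_zero : InPreT a b r μ ν 0 := by
  refine ⟨0, fun _ => 0, fun _ => 0, fun _ => 0, IsSOS_zero, by simp, fun I => ⟨IsSOS_zero, by simp⟩,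
    fun i => by simp, fun j => by simp, by simp⟩

lemma InPreT_add {f g : MvPolynomial (Fin a × Fin b) ℝ}
    (hf : InPreT a b r μ ν f) (hg : InPreT a b r μ ν g) : InPreT a b r μ ν (f + g) := by
  obtain ⟨s0, sI, lam, th, hs0, hd0, hsI, hlam, hth, heq⟩ := hf
  obtain ⟨s0', sI', lam', th', hs0', hd0', hsI', hlam', hth', heq'⟩ := hg
  refine ⟨s0 + s0', fun I => sI I + sI' I, fun i => lam i + lam' i, fun j => th j + th' j,
    IsSOS_add hs0 hs0', le_trans (totalDegree_add _ _) (by simp [hd0, hd0']),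
    fun I => ⟨IsSOS_add (hsI I).1 (hsI' I).1, ?_⟩, fun i => ?_, fun j => ?_, ?_⟩
  · rw [mul_add]
    exact le_trans (totalDegree_add _ _) (by simp [(hsI I).2, (hsI' I).2])
  · exact le_trans (totalDegree_add _ _) (by simp [hlam i, hlam' i])
  · exact le_trans (totalDegree_add _ _) (by simp [hth j, hth' j])
  · simp only [mul_add, add_mul, Finset.sum_add_distrib]
    rw [heq, heq']
    ring

lemma InPreT_Cmul {c : ℝ} (hc : 0 ≤ c) {f : MvPolynomial (Fin a × Fin b) ℝ}
    (hf : InPreT a b r μ ν f) : InPreT a b r μ ν (C c * f) := by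
  obtain ⟨s0, sI, lam, th, hs0, hd0, hsI, hlam, hth, heq⟩ := hf
  refine ⟨C c * s0, fun I => C c * sI I, fun i => C c * lam i, fun j => C c * th j,
    IsSOS_Cmul hc hs0, le_trans (totalDegree_mul _ _) (by simp [totalDegree_C, hd0]),
    fun I => ⟨IsSOS_Cmul hc (hsI I).1, ?_⟩, fun i => ?_, fun j => ?_, ?_⟩
  · have : eI I * (C c * sI I) = C c * (eI I * sI I) := by ring
    rw [this]
    exact le_trans (totalDegree_mul _ _) (by simp [totalDegree_C, (hsI I).2])
  · exact le_trans (totalDegree_mul _ _) (by simp [totalDegree_C, hlam i])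
  · exact le_trans (totalDegree_mul _ _) (by simp [totalDegree_C, hth j])
  · rw [heq]
    have h1 : ∑ I : Finset (Fin a × Fin b), eI I * (C c * sI I)
        = C c * ∑ I : Finset (Fin a × Fin b), eI I * sI I := by
      rw [Finset.mul_sum]
      exact Finset.sum_congr rfl fun I _ => by ring
    have h2 : ∑ i : Fin a, (C c * lam i) * rowPoly a b μ i
        = C c * ∑ i : Fin a, lam i * rowPoly a b μ i := by
      rw [Finset.mul_sum]
      exact Finset.sum_congr rfl fun i _ => by ring
    have h3 : ∑ j : Fin b, (C c * th j) * colPoly a b ν j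
        = C c * ∑ j : Fin b, th j * colPoly a b ν j := by
      rw [Finset.mul_sum]
      exact Finset.sum_congr rfl fun j _ => by ring
    rw [h1, h2, h3]
    ring

lemma InPreT_eI_sos {I : Finset (Fin a × Fin b)} {s : MvPolynomial (Fin a × Fin b) ℝ}
    (hs : IsSOS s) (hdeg : (eI I * s).totalDegree ≤ 2 * r) :
    InPreT a b r μ ν (eI I * s) := by
  classical
  refine ⟨0, fun J => if J = I then s else 0, fun _ => 0, fun _ => 0,
    IsSOS_zero, by simp, fun J => ?_, fun i => by simp, fun j => by simp, ?_⟩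
  · dsimp only
    by_cases hJ : J = I
    · rw [if_pos hJ]
      subst hJ
      exact ⟨hs, hdeg⟩
    · rw [if_neg hJ]
      exact ⟨IsSOS_zero, by simp⟩
  · have : ∀ J ∈ (Finset.univ : Finset (Finset (Fin a × Fin b))),
        eI J * (if J = I then s else 0) = if J = I then eI I * s else 0 := by
      intro J _
      by_cases hJ : J = I
      · subst hJ; simp
      · simp [hJ]
    rw [Finset.sum_congr rfl this, Finset.sum_ite_eq' Finset.univ I (fun _ => eI I * s)]
    simp

lemma InPreT_sos {s : MvPolynomial (Fin a × Fin b) ℝ}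
    (hs : IsSOS s) (hdeg : s.totalDegree ≤ 2 * r) : InPreT a b r μ ν s := by
  have := InPreT_eI_sos (μ := μ) (ν := ν) (I := (∅ : Finset (Fin a × Fin b))) hs
    (by rw [eI_empty, one_mul]; exact hdeg)
  rwa [eI_empty, one_mul] at this

lemma InPreT_row_mul {lam : MvPolynomial (Fin a × Fin b) ℝ} (i : Fin a)
    (hdeg : lam.totalDegree ≤ 2 * r - 1) :
    InPreT a b r μ ν (lam * rowPoly a b μ i) := by
  classical
  refine ⟨0, fun _ => 0, fun i' => if i' = i then lam else 0, fun _ => 0,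
    IsSOS_zero, by simp, fun J => ⟨IsSOS_zero, by simp⟩, fun i' => ?_, fun j => by simp, ?_⟩
  · dsimp only
    by_cases hi : i' = i
    · rw [if_pos hi]; exact hdeg
    · rw [if_neg hi]; simp
  · have : ∀ i' ∈ (Finset.univ : Finset (Fin a)),
        (if i' = i then lam else 0) * rowPoly a b μ i' =
          if i' = i then lam * rowPoly a b μ i else 0 := by
      intro i' _
      by_cases hi : i' = i
      · subst hi; simp
      · simp [hi]
    rw [Finset.sum_congr rfl this, Finset.sum_ite_eq' Finset.univ i
      (fun _ => lam * rowPoly a b μ i)]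
    simp

lemma InPreT_col_mul {th : MvPolynomial (Fin a × Fin b) ℝ} (j : Fin b)
    (hdeg : th.totalDegree ≤ 2 * r - 1) :
    InPreT a b r μ ν (th * colPoly a b ν j) := by
  classical
  refine ⟨0, fun _ => 0, fun _ => 0, fun j' => if j' = j then th else 0,
    IsSOS_zero, by simp, fun J => ⟨IsSOS_zero, by simp⟩, fun i => by simp, fun j' => ?_, ?_⟩
  · dsimp only
    by_cases hj : j' = j
    · rw [if_pos hj]; exact hdeg
    · rw [if_neg hj]; simp
  · have : ∀ j' ∈ (Finset.univ : Finset (Fin b)),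
        (if j' = j then th else 0) * colPoly a b ν j' =
          if j' = j then th * colPoly a b ν j else 0 := by
      intro j' _
      by_cases hj : j' = j
      · subst hj; simp
      · simp [hj]
    rw [Finset.sum_congr rfl this, Finset.sum_ite_eq' Finset.univ j
      (fun _ => th * colPoly a b ν j)]
    simp

lemma rowPoly_totalDegree_le (i : Fin a) : (rowPoly a b μ i).totalDegree ≤ 1 := by
  rw [rowPoly]
  refine le_trans (totalDegree_sub_le _ _) ?_
  simp only [totalDegree_C, max_le_iff]
  constructor
  · refine le_trans (totalDegree_finset_sum _ _) ?_
    apply Finset.sup_le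
    intro j _
    rw [totalDegree_X]
  · omega

lemma colPoly_totalDegree_le (j : Fin b) : (colPoly a b ν j).totalDegree ≤ 1 := by
  rw [colPoly]
  refine le_trans (totalDegree_sub_le _ _) ?_
  simp only [totalDegree_C, max_le_iff]
  constructor
  · refine le_trans (totalDegree_finset_sum _ _) ?_
    apply Finset.sup_le
    intro i _
    rw [totalDegree_X]
  · omega

lemma InPreT_deg_le (hr : 0 < r) {f : MvPolynomial (Fin a × Fin b) ℝ}
    (hf : InPreT a b r μ ν f) : f.totalDegree ≤ 2 * r := by
  obtain ⟨s0, sI, lam, th, hs0, hd0, hsI, hlam, hth, heq⟩ := hf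
  rw [heq]
  refine le_trans (totalDegree_add _ _) (max_le (le_trans (totalDegree_add _ _)
    (max_le (le_trans (totalDegree_add _ _) (max_le hd0 ?_)) ?_)) ?_)
  · refine le_trans (totalDegree_finset_sum _ _) (Finset.sup_le fun I _ => (hsI I).2)
  · refine le_trans (totalDegree_finset_sum _ _) (Finset.sup_le fun i _ => ?_)
    refine le_trans (totalDegree_mul _ _) ?_
    have h1 := hlam i
    have h2 := rowPoly_totalDegree_le (b := b) (μ := μ) i
    omega
  · refine le_trans (totalDegree_finset_sum _ _) (Finset.sup_le fun j _ => ?_)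
    refine le_trans (totalDegree_mul _ _) ?_
    have h1 := hth j
    have h2 := colPoly_totalDegree_le (a := a) (ν := ν) j
    omega

end preT

section NN
open MvPolynomial
variable {a b r : ℕ} {μ : Fin a → ℝ} {ν : Fin b → ℝ}

def oddPart (d : (Fin a × Fin b) →₀ ℕ) : Finset (Fin a × Fin b) :=
  d.support.filter (fun q => Odd (d q))

noncomputable def halfPart (d : (Fin a × Fin b) →₀ ℕ) : (Fin a × Fin b) →₀ ℕ :=
  Finsupp.mapRange (fun e => e / 2) (by norm_num) d

lemma d_decomp (d : (Fin a × Fin b) →₀ ℕ) :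
    (∑ q ∈ oddPart d, Finsupp.single q 1) + halfPart d + halfPart d = d := by
  classical
  ext q
  rw [Finsupp.add_apply, Finsupp.add_apply, Finsupp.finset_sum_apply]
  have h1 : ∑ q' ∈ oddPart d, (Finsupp.single q' (1:ℕ)) q
      = if q ∈ oddPart d then 1 else 0 := by
    rw [Finset.sum_congr rfl (fun q' _ => Finsupp.single_apply (a := q') (a' := q) (b := (1:ℕ)))]
    exact Finset.sum_ite_eq' (oddPart d) q (fun _ => 1)
  rw [h1]
  have h2 : (halfPart d) q = d q / 2 := rfl
  rw [h2]
  by_cases hq : q ∈ oddPart d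
  · rw [if_pos hq]
    have : Odd (d q) := (Finset.mem_filter.mp hq).2
    rw [Nat.odd_iff] at this
    omega
  · rw [if_neg hq]
    have : ¬ Odd (d q) ∨ d q = 0 := by
      by_cases hs : q ∈ d.support
      · left
        intro hodd
        exact hq (Finset.mem_filter.mpr ⟨hs, hodd⟩)
      · right
        exact Finsupp.notMem_support_iff.mp hs
    rcases this with h | h
    · rw [Nat.odd_iff] at h
      omega
    · omega

lemma monomial_decomp {c : ℝ} (hc : 0 ≤ c) (d : (Fin a × Fin b) →₀ ℕ) :
    (monomial d c : MvPolynomial (Fin a × Fin b) ℝ)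
      = eI (oddPart d) * (monomial (halfPart d) (Real.sqrt c)) ^ 2 := by
  rw [eI_eq_monomial, pow_two, monomial_mul, monomial_mul, one_mul,
    Real.mul_self_sqrt hc, ← add_assoc, d_decomp]

lemma InPreT_of_coeff_nonneg {f : MvPolynomial (Fin a × Fin b) ℝ}
    (hc : ∀ d, 0 ≤ MvPolynomial.coeff d f) (hdeg : f.totalDegree ≤ 2 * r) :
    InPreT a b r μ ν f := by
  classical
  have hId : ∀ I : Finset (Fin a × Fin b),
      eI I * (∑ d ∈ f.support.filter (fun d => oddPart d = I),
        (monomial (halfPart d) (Real.sqrt (MvPolynomial.coeff d f))) ^ 2)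
      = ∑ d ∈ f.support.filter (fun d => oddPart d = I), monomial d (MvPolynomial.coeff d f) := by
    intro I
    rw [Finset.mul_sum]
    refine Finset.sum_congr rfl fun d hd => ?_
    have hI : oddPart d = I := (Finset.mem_filter.mp hd).2
    rw [← hI, ← monomial_decomp (hc d)]
  refine ⟨0, fun I => ∑ d ∈ f.support.filter (fun d => oddPart d = I),
      (monomial (halfPart d) (Real.sqrt (MvPolynomial.coeff d f))) ^ 2,
    fun _ => 0, fun _ => 0, IsSOS_zero, by simp, fun I => ⟨IsSOS_sum_sq _ _, ?_⟩,
    fun _ => by simp, fun _ => by simp, ?_⟩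
  · rw [hId I]
    refine le_trans (totalDegree_finset_sum _ _) (Finset.sup_le fun d hd => ?_)
    refine le_trans (deg_monomial_le _ _) ?_
    have := mem_support_degree_le (Finset.mem_filter.mp hd).1
    omega
  · have : ∑ I : Finset (Fin a × Fin b), eI I *
        (∑ d ∈ f.support.filter (fun d => oddPart d = I),
          (monomial (halfPart d) (Real.sqrt (MvPolynomial.coeff d f))) ^ 2)
        = f := by
      rw [Finset.sum_congr rfl (fun I _ => hId I)]
      rw [Finset.sum_fiberwise f.support (fun d => oddPart d)
        (fun d => monomial d (MvPolynomial.coeff d f))]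
      exact support_sum_monomial_coeff f
    rw [this]
    simp

end NN

section sPoly
open MvPolynomial
variable {a b r : ℕ} {μ : Fin a → ℝ} {ν : Fin b → ℝ}

noncomputable def sPoly (a b : ℕ) : MvPolynomial (Fin a × Fin b) ℝ := ∑ q, X q

lemma sPoly_totalDegree_le : (sPoly a b).totalDegree ≤ 1 := by
  refine le_trans (totalDegree_finset_sum _ _) (Finset.sup_le fun q _ => ?_)
  rw [totalDegree_X]

lemma sk_totalDegree_le (k : ℕ) : ((sPoly a b) ^ k).totalDegree ≤ k := by
  refine le_trans (totalDegree_pow _ _) ?_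
  have := sPoly_totalDegree_le (a := a) (b := b)
  nlinarith [this]

lemma coeff_sPoly_nonneg (d : (Fin a × Fin b) →₀ ℕ) : 0 ≤ MvPolynomial.coeff d (sPoly a b) := by
  classical
  rw [sPoly, MvPolynomial.coeff_sum]
  refine Finset.sum_nonneg fun q _ => ?_
  rw [MvPolynomial.X, coeff_monomial]
  split <;> norm_num

lemma coeff_mul_nonneg {p q : MvPolynomial (Fin a × Fin b) ℝ}
    (hp : ∀ d, 0 ≤ MvPolynomial.coeff d p) (hq : ∀ d, 0 ≤ MvPolynomial.coeff d q) :
    ∀ d, 0 ≤ MvPolynomial.coeff d (p * q) := by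
  classical
  intro d
  rw [MvPolynomial.coeff_mul]
  exact Finset.sum_nonneg fun x _ => mul_nonneg (hp x.1) (hq x.2)

lemma coeff_sk_nonneg (k : ℕ) (d : (Fin a × Fin b) →₀ ℕ) :
    0 ≤ MvPolynomial.coeff d ((sPoly a b) ^ k) := by
  induction k generalizing d with
  | zero =>
    rw [pow_zero]
    rcases eq_or_ne d 0 with h | h
    · subst h; simp
    · rw [MvPolynomial.coeff_one, if_neg (fun hh : 0 = d => h hh.symm)]
  | succ k ih =>
    rw [pow_succ]
    exact coeff_mul_nonneg (fun d' => ih d') coeff_sPoly_nonneg d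

lemma coeff_single_sPoly (q : Fin a × Fin b) :
    MvPolynomial.coeff (Finsupp.single q 1) (sPoly a b) = 1 := by
  classical
  rw [sPoly, MvPolynomial.coeff_sum]
  have h1 : ∀ q' ∈ (Finset.univ : Finset (Fin a × Fin b)),
      MvPolynomial.coeff (Finsupp.single q 1) (X q' : MvPolynomial (Fin a × Fin b) ℝ)
        = if q' = q then 1 else 0 := by
    intro q' _
    rw [MvPolynomial.X, coeff_monomial]
    by_cases h : q' = q
    · subst h; simp
    · rw [if_neg (fun hh => h (by
        have := Finsupp.single_left_injective (α := Fin a × Fin b) (one_ne_zero (α := ℕ))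
        exact this hh)), if_neg h]
  rw [Finset.sum_congr rfl h1, Finset.sum_ite_eq' Finset.univ q (fun _ => (1:ℝ))]
  simp

lemma coeff_sk_ge_one : ∀ (k : ℕ) (β : (Fin a × Fin b) →₀ ℕ), mdeg β = k →
    1 ≤ MvPolynomial.coeff β ((sPoly a b) ^ k) := by
  intro k
  induction k with
  | zero =>
    intro β hβ
    rw [(mdeg_eq_zero_iff β).mp hβ, pow_zero]
    simp
  | succ k ih =>
    intro β hβ
    have hβne : β ≠ 0 := by
      intro h0
      rw [h0] at hβ
      simp at hβ
    obtain ⟨q, γ, heq, hγ⟩ := exists_single_add β hβne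
    rw [hβ] at hγ
    simp only [Nat.add_sub_cancel] at hγ
    rw [pow_succ]
    classical
    rw [MvPolynomial.coeff_mul]
    have hmem : ((γ, Finsupp.single q 1) : ((Fin a × Fin b) →₀ ℕ) × _)
        ∈ Finset.HasAntidiagonal.antidiagonal β := by
      rw [Finset.HasAntidiagonal.mem_antidiagonal, heq]
      abel
    have hterm : 1 ≤ MvPolynomial.coeff γ ((sPoly a b) ^ k)
        * MvPolynomial.coeff (Finsupp.single q 1) (sPoly a b) := by
      rw [coeff_single_sPoly, mul_one]
      exact ih γ hγ
    refine le_trans hterm (Finset.single_le_sum (f := fun x =>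
      MvPolynomial.coeff x.1 ((sPoly a b) ^ k) * MvPolynomial.coeff x.2 (sPoly a b))
      (fun x _ => mul_nonneg (coeff_sk_nonneg k x.1) (coeff_sPoly_nonneg x.2)) hmem)

lemma InPreT_sk_sub_monomial (β : (Fin a × Fin b) →₀ ℕ) (h2r : mdeg β ≤ 2 * r) :
    InPreT a b r μ ν ((sPoly a b) ^ (mdeg β) - monomial β 1) := by
  classical
  refine InPreT_of_coeff_nonneg (fun d => ?_) ?_
  · rw [MvPolynomial.coeff_sub, coeff_monomial]
    by_cases h : β = d
    · subst h
      rw [if_pos rfl]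
      have := coeff_sk_ge_one (mdeg β) β rfl
      linarith
    · rw [if_neg h, sub_zero]
      exact coeff_sk_nonneg _ d
  · refine le_trans (totalDegree_sub_le _ _) (max_le ?_ ?_)
    · exact le_trans (sk_totalDegree_le _) h2r
    · refine le_trans (deg_monomial_le _ _) ?_
      rw [← mdeg_eq_degree]
      exact h2r

lemma sum_rowPoly (hμ2 : ∑ i, μ i = 1) :
    ∑ i, rowPoly a b μ i = sPoly a b - 1 := by
  simp only [rowPoly]
  rw [Finset.sum_sub_distrib, ← map_sum C μ Finset.univ, hμ2, map_one, sPoly,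
    Fintype.sum_prod_type]

lemma InPreT_one_sub_sk (hμ2 : ∑ i, μ i = 1) (k : ℕ) (hk : k ≤ 2 * r) :
    InPreT a b r μ ν (1 - (sPoly a b) ^ k) := by
  classical
  set G : MvPolynomial (Fin a × Fin b) ℝ := ∑ j ∈ Finset.range k, (sPoly a b) ^ j with hG
  have hkey : ∑ i : Fin a, (-G) * rowPoly a b μ i = 1 - (sPoly a b) ^ k := by
    rw [← Finset.mul_sum, sum_rowPoly hμ2, hG, neg_mul, geom_sum_mul]
    ring
  have hGdeg : (-G).totalDegree ≤ 2 * r - 1 := by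
    rw [totalDegree_neg, hG]
    refine le_trans (totalDegree_finset_sum _ _) (Finset.sup_le fun j hj => ?_)
    rw [Finset.mem_range] at hj
    refine le_trans (sk_totalDegree_le j) ?_
    omega
  refine ⟨0, fun _ => 0, fun _ => -G, fun _ => 0, IsSOS_zero, by simp,
    fun I => ⟨IsSOS_zero, by simp⟩, fun _ => hGdeg, fun _ => by simp, ?_⟩
  rw [hkey]
  simp

lemma InPreT_one_sub_monomial (hμ2 : ∑ i, μ i = 1) (β : (Fin a × Fin b) →₀ ℕ)
    (h2r : mdeg β ≤ 2 * r) :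
    InPreT a b r μ ν (1 - monomial β 1) := by
  have h := InPreT_add (InPreT_one_sub_sk (ν := ν) hμ2 (mdeg β) h2r)
    (InPreT_sk_sub_monomial (μ := μ) (ν := ν) β h2r)
  rwa [sub_add_sub_cancel] at h

lemma InPreT_one_add_small (hμ2 : ∑ i, μ i = 1) (β : (Fin a × Fin b) →₀ ℕ)
    (h2r : mdeg β ≤ 2 * r) {t : ℝ} (ht : |t| ≤ 1) :
    InPreT a b r μ ν (1 + C t * monomial β 1) := by
  obtain ⟨ht1, ht2⟩ := abs_le.mp ht
  rcases le_or_gt 0 t with h0 | h0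
  · refine InPreT_add (InPreT_sos IsSOS_one (by simp)) (InPreT_of_coeff_nonneg (fun d => ?_) ?_)
    · rw [MvPolynomial.C_mul_monomial, mul_one, coeff_monomial]
      split
      · exact h0
      · exact le_refl 0
    · rw [MvPolynomial.C_mul_monomial]
      refine le_trans (deg_monomial_le _ _) ?_
      rw [← mdeg_eq_degree]
      exact h2r
  · have h1 : InPreT a b r μ ν (C (1 + t)) :=
      InPreT_sos (IsSOS_C (by linarith)) (le_of_eq (MvPolynomial.totalDegree_C _) |>.trans (Nat.zero_le _))
    have h2 : InPreT a b r μ ν (C (-t) * (1 - monomial β 1)) :=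
      InPreT_Cmul (by linarith) (InPreT_one_sub_monomial hμ2 β h2r)
    have h3 := InPreT_add h1 h2
    have heq : C (1 + t) + C (-t) * (1 - monomial β 1)
        = 1 + C t * monomial β 1 := by
      rw [map_add, map_neg, map_one]
      ring
    rwa [heq] at h3

end sPoly

section rieszK
open MvPolynomial
variable {a b r : ℕ} {μ : Fin a → ℝ} {ν : Fin b → ℝ} {z : ((Fin a × Fin b) →₀ ℕ) → ℝ}

lemma riesz_eI_sos_nonneg
    (h2 : ∀ I : Finset (Fin a × Fin b), I.card ≤ 2 * r →
      locPSD z (eI I) (r - (I.card + 1) / 2))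
    {I : Finset (Fin a × Fin b)} {s : MvPolynomial (Fin a × Fin b) ℝ}
    (hs : IsSOS s) (hdeg : (eI I * s).totalDegree ≤ 2 * r) :
    0 ≤ riesz z (eI I * s) := by
  classical
  obtain ⟨k, q, hq⟩ := hs
  subst hq
  rw [Finset.mul_sum, riesz_sum]
  by_cases hall : ∀ i, q i = 0
  · refine le_of_eq (Finset.sum_eq_zero fun i _ => ?_).symm
    rw [hall i]
    simp
  · push_neg at hall
    rw [eI_eq_monomial] at hdeg
    have hD := deg_bound_of_monomial_mul_sos (∑ q' ∈ I, Finsupp.single q' 1) q hdeg hall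
    rw [degree_eIindex] at hD
    have hcard : I.card ≤ 2 * r := by omega
    refine Finset.sum_nonneg fun i _ => ?_
    have hle : (q i).totalDegree ≤ Finset.univ.sup fun i => (q i).totalDegree :=
      Finset.le_sup (f := fun i => (q i).totalDegree) (Finset.mem_univ i)
    have hqi : (q i).totalDegree ≤ r - (I.card + 1) / 2 := by omega
    exact h2 I hcard (q i) hqi

lemma riesz_row_mul_eq_zero (hr : 0 < r)
    (h3 : ∀ i, locZero z (rowPoly a b μ i) (r - 1))
    (h5 : ∀ i₁ i₂ : Fin a, ∀ j : Fin b, locZero z (rowPoly a b μ i₁ * X (i₂, j)) (r - 1))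
    (i : Fin a) {lam : MvPolynomial (Fin a × Fin b) ℝ}
    (hdeg : lam.totalDegree ≤ 2 * r - 1) :
    riesz z (lam * rowPoly a b μ i) = 0 := by
  classical
  conv_lhs => rw [← support_sum_monomial_coeff lam]
  rw [Finset.sum_mul, riesz_sum]
  refine Finset.sum_eq_zero fun α hα => ?_
  have hmd : mdeg α ≤ 2 * r - 1 := le_trans (MvPolynomial.le_totalDegree hα) hdeg
  have hsm : (monomial α (MvPolynomial.coeff α lam)) * rowPoly a b μ i
      = (MvPolynomial.coeff α lam) • ((monomial α 1) * rowPoly a b μ i) := by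
    rw [← smul_mul_assoc, MvPolynomial.smul_monomial, smul_eq_mul, mul_one]
  rw [hsm, riesz_smul]
  suffices h : riesz z ((monomial α 1) * rowPoly a b μ i) = 0 by
    rw [h, mul_zero]
  rcases Nat.lt_or_ge (mdeg α) (2 * r - 1) with hlow | hhigh
  · obtain ⟨β, γ, hαeq, hβ, hγ⟩ := split_low hr α (by omega)
    have hmono : (monomial α (1:ℝ)) = monomial β 1 * monomial γ 1 := by
      rw [monomial_mul, one_mul, hαeq]
    rw [hmono, show (monomial β (1:ℝ) * monomial γ 1) * rowPoly a b μ i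
      = rowPoly a b μ i * monomial β 1 * monomial γ 1 from by ring]
    exact h3 i β γ hβ hγ
  · have heq : mdeg α = 2 * r - 1 := by omega
    obtain ⟨q, β, γ, hαeq, hβ, hγ⟩ := split_high hr α heq
    have hmono : (monomial α (1:ℝ)) = X q * monomial β 1 * monomial γ 1 := by
      rw [MvPolynomial.X, monomial_mul, monomial_mul, one_mul, one_mul, hαeq]
    obtain ⟨q1, q2⟩ := q
    rw [hmono, show (X (q1, q2) * monomial β (1:ℝ) * monomial γ 1) * rowPoly a b μ i
      = (rowPoly a b μ i * X (q1, q2)) * monomial β 1 * monomial γ 1 from by ring]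
    exact h5 i q1 q2 β γ hβ hγ

lemma riesz_col_mul_eq_zero (hr : 0 < r)
    (h4 : ∀ j, locZero z (colPoly a b ν j) (r - 1))
    (h6 : ∀ j₁ j₂ : Fin b, ∀ i : Fin a, locZero z (colPoly a b ν j₁ * X (i, j₂)) (r - 1))
    (j : Fin b) {th : MvPolynomial (Fin a × Fin b) ℝ}
    (hdeg : th.totalDegree ≤ 2 * r - 1) :
    riesz z (th * colPoly a b ν j) = 0 := by
  classical
  conv_lhs => rw [← support_sum_monomial_coeff th]
  rw [Finset.sum_mul, riesz_sum]
  refine Finset.sum_eq_zero fun α hα => ?_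
  have hmd : mdeg α ≤ 2 * r - 1 := le_trans (MvPolynomial.le_totalDegree hα) hdeg
  have hsm : (monomial α (MvPolynomial.coeff α th)) * colPoly a b ν j
      = (MvPolynomial.coeff α th) • ((monomial α 1) * colPoly a b ν j) := by
    rw [← smul_mul_assoc, MvPolynomial.smul_monomial, smul_eq_mul, mul_one]
  rw [hsm, riesz_smul]
  suffices h : riesz z ((monomial α 1) * colPoly a b ν j) = 0 by
    rw [h, mul_zero]
  rcases Nat.lt_or_ge (mdeg α) (2 * r - 1) with hlow | hhigh
  · obtain ⟨β, γ, hαeq, hβ, hγ⟩ := split_low hr α (by omega)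
    have hmono : (monomial α (1:ℝ)) = monomial β 1 * monomial γ 1 := by
      rw [monomial_mul, one_mul, hαeq]
    rw [hmono, show (monomial β (1:ℝ) * monomial γ 1) * colPoly a b ν j
      = colPoly a b ν j * monomial β 1 * monomial γ 1 from by ring]
    exact h4 j β γ hβ hγ
  · have heq : mdeg α = 2 * r - 1 := by omega
    obtain ⟨q, β, γ, hαeq, hβ, hγ⟩ := split_high hr α heq
    have hmono : (monomial α (1:ℝ)) = X q * monomial β 1 * monomial γ 1 := by
      rw [MvPolynomial.X, monomial_mul, monomial_mul, one_mul, one_mul, hαeq]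
    obtain ⟨q1, q2⟩ := q
    rw [hmono, show (X (q1, q2) * monomial β (1:ℝ) * monomial γ 1) * colPoly a b ν j
      = (colPoly a b ν j * X (q1, q2)) * monomial β 1 * monomial γ 1 from by ring]
    exact h6 j q2 q1 β γ hβ hγ

lemma riesz_nonneg_of_InPreT (hr : 0 < r) (hz : SFeas a b r μ ν z)
    {f : MvPolynomial (Fin a × Fin b) ℝ} (hf : InPreT a b r μ ν f) :
    0 ≤ riesz z f := by
  obtain ⟨hz0, h2, h3, h4, h5, h6⟩ := hz
  obtain ⟨s0, sI, lam, th, hs0, hd0, hsI, hlam, hth, heq⟩ := hf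
  rw [heq, riesz_add, riesz_add, riesz_add, riesz_sum, riesz_sum, riesz_sum]
  have t1 : 0 ≤ riesz z s0 := by
    have h := riesz_eI_sos_nonneg h2 (I := ∅) hs0
      (by rw [eI_empty, one_mul]; exact hd0)
    rwa [eI_empty, one_mul] at h
  have t2 : 0 ≤ ∑ I : Finset (Fin a × Fin b), riesz z (eI I * sI I) :=
    Finset.sum_nonneg fun I _ => riesz_eI_sos_nonneg h2 (hsI I).1 (hsI I).2
  have t3 : ∑ i : Fin a, riesz z (lam i * rowPoly a b μ i) = 0 :=
    Finset.sum_eq_zero fun i _ => riesz_row_mul_eq_zero hr h3 h5 i (hlam i)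
  have t4 : ∑ j : Fin b, riesz z (th j * colPoly a b ν j) = 0 :=
    Finset.sum_eq_zero fun j _ => riesz_col_mul_eq_zero hr h4 h6 j (hth j)
  rw [t3, t4]
  linarith

end rieszK

section comp
open MvPolynomial
variable {a b : ℕ} {r : ℕ} {μ : Fin a → ℝ} {ν : Fin b → ℝ}

lemma riesz_rowPoly (z : ((Fin a × Fin b) →₀ ℕ) → ℝ) (i : Fin a) :
    riesz z (rowPoly a b μ i) = (∑ j, z (Finsupp.single (i,j) 1)) - μ i * z 0 := by
  rw [rowPoly, riesz_sub, riesz_sum, riesz_C]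
  congr 1
  exact Finset.sum_congr rfl fun j _ => riesz_X z (i, j)

lemma riesz_colPoly (z : ((Fin a × Fin b) →₀ ℕ) → ℝ) (j : Fin b) :
    riesz z (colPoly a b ν j) = (∑ i, z (Finsupp.single (i,j) 1)) - ν j * z 0 := by
  rw [colPoly, riesz_sub, riesz_sum, riesz_C]
  congr 1
  exact Finset.sum_congr rfl fun i _ => riesz_X z (i, j)

lemma riesz_rowPoly_mul_X (z : ((Fin a × Fin b) →₀ ℕ) → ℝ) (i : Fin a)
    (kl : Fin a × Fin b) :
    riesz z (rowPoly a b μ i * X kl)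
      = (∑ j, z (Finsupp.single (i,j) 1 + Finsupp.single kl 1))
        - μ i * z (Finsupp.single kl 1) := by
  rw [rowPoly, sub_mul, Finset.sum_mul, riesz_sub, riesz_sum]
  congr 1
  · exact Finset.sum_congr rfl fun j _ => riesz_X_mul_X z (i, j) kl
  · rw [MvPolynomial.X, MvPolynomial.C_mul_monomial, riesz_monomial, mul_one]

lemma riesz_colPoly_mul_X (z : ((Fin a × Fin b) →₀ ℕ) → ℝ) (j : Fin b)
    (kl : Fin a × Fin b) :
    riesz z (colPoly a b ν j * X kl)
      = (∑ i, z (Finsupp.single (i,j) 1 + Finsupp.single kl 1))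
        - ν j * z (Finsupp.single kl 1) := by
  rw [colPoly, sub_mul, Finset.sum_mul, riesz_sub, riesz_sum]
  congr 1
  · exact Finset.sum_congr rfl fun i _ => riesz_X_mul_X z (i, j) kl
  · rw [MvPolynomial.X, MvPolynomial.C_mul_monomial, riesz_monomial, mul_one]

lemma riesz_Lpoly (z : ((Fin a × Fin b) →₀ ℕ) → ℝ) (L : Fin a → Fin b → Fin a → Fin b → ℝ) :
    riesz z (Lpoly a b L) = objS a b L z := by
  rw [Lpoly, objS, riesz_sum]
  refine Finset.sum_congr rfl fun i _ => ?_
  rw [riesz_sum]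
  refine Finset.sum_congr rfl fun j _ => ?_
  rw [riesz_sum]
  refine Finset.sum_congr rfl fun k _ => ?_
  rw [riesz_sum]
  refine Finset.sum_congr rfl fun l _ => ?_
  rw [MvPolynomial.X, MvPolynomial.X, MvPolynomial.C_mul_monomial, monomial_mul,
    riesz_monomial, mul_one, mul_one]

lemma probvec_le_one {μ : Fin a → ℝ} (hμ : IsProbVec μ) (i : Fin a) : μ i ≤ 1 := by
  rw [← hμ.2]
  exact Finset.single_le_sum (f := fun i => μ i) (fun i' _ => hμ.1 i') (Finset.mem_univ i)

/-- Abstract moment bounds. -/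
lemma moment_upper {μ : Fin a → ℝ} (hμ : IsProbVec μ)
    {z : ((Fin a × Fin b) →₀ ℕ) → ℝ}
    (h1 : ∀ q : Fin a × Fin b, 0 ≤ z (Finsupp.single q 1))
    (h2 : ∀ q q' : Fin a × Fin b, 0 ≤ z (Finsupp.single q 1 + Finsupp.single q' 1))
    (h3 : ∀ i, (∑ j, z (Finsupp.single (i,j) 1)) = μ i * z 0)
    (h4 : ∀ i (kl : Fin a × Fin b),
      (∑ j, z (Finsupp.single (i,j) 1 + Finsupp.single kl 1)) = μ i * z (Finsupp.single kl 1))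
    (h0 : 0 ≤ z 0) (ij kl : Fin a × Fin b) :
    z (Finsupp.single ij 1 + Finsupp.single kl 1) ≤ z 0 := by
  have step1 : z (Finsupp.single ij 1 + Finsupp.single kl 1)
      ≤ μ ij.1 * z (Finsupp.single kl 1) := by
    rw [← h4 ij.1 kl]
    exact Finset.single_le_sum (f := fun j => z (Finsupp.single (ij.1, j) 1 + Finsupp.single kl 1))
      (fun j _ => h2 _ _) (Finset.mem_univ ij.2)
  have step2 : z (Finsupp.single kl 1) ≤ μ kl.1 * z 0 := by
    rw [← h3 kl.1]
    exact Finset.single_le_sum (f := fun l => z (Finsupp.single (kl.1, l) 1))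
      (fun l _ => h1 _) (Finset.mem_univ kl.2)
  have hμ1 := probvec_le_one hμ ij.1
  have hμ2 := probvec_le_one hμ kl.1
  have hμn1 := hμ.1 ij.1
  have hμn2 := hμ.1 kl.1
  nlinarith [h1 kl, h2 ij kl]

end comp

section feas
open MvPolynomial
variable {a b r : ℕ} {μ : Fin a → ℝ} {ν : Fin b → ℝ}

lemma SFeas_moment_nonneg1 (hr : 0 < r) {z : ((Fin a × Fin b) →₀ ℕ) → ℝ}
    (hz : SFeas a b r μ ν z) (q : Fin a × Fin b) : 0 ≤ z (Finsupp.single q 1) := by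
  obtain ⟨hz0, h2, h3, h4, h5, h6⟩ := hz
  have := h2 {q} (by simp; omega) 1 (by simp)
  rwa [one_pow, mul_one, eI_singleton, riesz_X] at this

lemma SFeas_moment_nonneg2 (hr : 0 < r) {z : ((Fin a × Fin b) →₀ ℕ) → ℝ}
    (hz : SFeas a b r μ ν z) (q q' : Fin a × Fin b) :
    0 ≤ z (Finsupp.single q 1 + Finsupp.single q' 1) := by
  obtain ⟨hz0, h2, h3, h4, h5, h6⟩ := hz
  rcases eq_or_ne q q' with h | h
  · subst h
    have := h2 ∅ (by simp) (X q) (by rw [totalDegree_X]; simp only [Finset.card_empty]; omega)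
    rwa [eI_empty, one_mul, pow_two, riesz_X_mul_X] at this
  · have := h2 {q, q'} (by
      refine le_trans (Finset.card_insert_le _ _) ?_
      simp
      omega) 1 (by simp)
    rwa [one_pow, mul_one, eI_pair h, riesz_X_mul_X] at this

lemma SFeas_moment_row (hr : 0 < r) {z : ((Fin a × Fin b) →₀ ℕ) → ℝ}
    (hz : SFeas a b r μ ν z) (i : Fin a) :
    (∑ j, z (Finsupp.single (i,j) 1)) = μ i * z 0 := by
  obtain ⟨hz0, h2, h3, h4, h5, h6⟩ := hz
  have := h3 i 0 0 (by simp) (by simp)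
  rw [MvPolynomial.monomial_zero', map_one, mul_one, mul_one, riesz_rowPoly] at this
  linarith

lemma SFeas_moment_row2 (hr : 0 < r) {z : ((Fin a × Fin b) →₀ ℕ) → ℝ}
    (hz : SFeas a b r μ ν z) (i : Fin a) (kl : Fin a × Fin b) :
    (∑ j, z (Finsupp.single (i,j) 1 + Finsupp.single kl 1))
      = μ i * z (Finsupp.single kl 1) := by
  obtain ⟨hz0, h2, h3, h4, h5, h6⟩ := hz
  have := h5 i kl.1 kl.2 0 0 (by simp) (by simp)
  rw [MvPolynomial.monomial_zero', map_one, mul_one, mul_one] at this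
  have h' : riesz z (rowPoly a b μ i * X kl) = 0 := by
    rcases kl with ⟨k, l⟩
    exact this
  rw [riesz_rowPoly_mul_X] at h'
  linarith

lemma SFeas_moment_le_one (hr : 0 < r) (hμ : IsProbVec μ) {z : ((Fin a × Fin b) →₀ ℕ) → ℝ}
    (hz : SFeas a b r μ ν z) (ij kl : Fin a × Fin b) :
    0 ≤ z (Finsupp.single ij 1 + Finsupp.single kl 1) ∧
      z (Finsupp.single ij 1 + Finsupp.single kl 1) ≤ 1 := by
  have h0 : z 0 = 1 := hz.1
  refine ⟨SFeas_moment_nonneg2 hr hz ij kl, ?_⟩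
  have := moment_upper hμ (SFeas_moment_nonneg1 hr hz) (SFeas_moment_nonneg2 hr hz)
    (SFeas_moment_row hr hz) (SFeas_moment_row2 hr hz) (by rw [h0]; norm_num) ij kl
  rwa [h0] at this

lemma SFeas_objS_lower (hr : 0 < r) (hμ : IsProbVec μ)
    (L : Fin a → Fin b → Fin a → Fin b → ℝ) {z : ((Fin a × Fin b) →₀ ℕ) → ℝ}
    (hz : SFeas a b r μ ν z) :
    -(∑ i, ∑ j, ∑ k, ∑ l, |L i j k l|) ≤ objS a b L z := by
  have key : 0 ≤ objS a b L z + ∑ i, ∑ j, ∑ k, ∑ l, |L i j k l| := by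
    rw [objS, ← Finset.sum_add_distrib]
    refine Finset.sum_nonneg fun i _ => ?_
    rw [← Finset.sum_add_distrib]
    refine Finset.sum_nonneg fun j _ => ?_
    rw [← Finset.sum_add_distrib]
    refine Finset.sum_nonneg fun k _ => ?_
    rw [← Finset.sum_add_distrib]
    refine Finset.sum_nonneg fun l _ => ?_
    obtain ⟨hge, hle⟩ := SFeas_moment_le_one hr hμ hz (i,j) (k,l)
    rcases le_or_gt 0 (L i j k l) with hL | hL
    · have : |L i j k l| = L i j k l := abs_of_nonneg hL
      nlinarith
    · have : |L i j k l| = -(L i j k l) := abs_of_neg hL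
      nlinarith
  linarith

noncomputable def diracZ {σ : Type*} (pt : σ → ℝ) : (σ →₀ ℕ) → ℝ :=
  fun α => α.prod fun q e => pt q ^ e

lemma riesz_diracZ {σ : Type*} (pt : σ → ℝ) (p : MvPolynomial σ ℝ) :
    riesz (diracZ pt) p = eval pt p := by
  rw [riesz, eval_eq]
  rfl

lemma eval_pt_rowPoly (hν2 : ∑ j, ν j = 1) (i : Fin a) :
    eval (fun q : Fin a × Fin b => μ q.1 * ν q.2) (rowPoly a b μ i) = 0 := by
  rw [rowPoly, map_sub, map_sum, eval_C]
  have : ∀ j ∈ (Finset.univ : Finset (Fin b)),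
      eval (fun q : Fin a × Fin b => μ q.1 * ν q.2) (X (i, j)) = μ i * ν j :=
    fun j _ => eval_X _
  rw [Finset.sum_congr rfl this, ← Finset.mul_sum, hν2, mul_one, sub_self]

lemma eval_pt_colPoly (hμ2 : ∑ i, μ i = 1) (j : Fin b) :
    eval (fun q : Fin a × Fin b => μ q.1 * ν q.2) (colPoly a b ν j) = 0 := by
  rw [colPoly, map_sub, map_sum, eval_C]
  have : ∀ i ∈ (Finset.univ : Finset (Fin a)),
      eval (fun q : Fin a × Fin b => μ q.1 * ν q.2) (X (i, j)) = μ i * ν j :=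
    fun i _ => eval_X _
  rw [Finset.sum_congr rfl this, ← Finset.sum_mul, hμ2, one_mul, sub_self]

lemma SFeas_diracZ (hμ : IsProbVec μ) (hν : IsProbVec ν) :
    SFeas a b r μ ν (diracZ (fun q : Fin a × Fin b => μ q.1 * ν q.2)) := by
  set pt := fun q : Fin a × Fin b => μ q.1 * ν q.2 with hpt
  have hptn : ∀ q, 0 ≤ pt q := fun q => mul_nonneg (hμ.1 q.1) (hν.1 q.2)
  refine ⟨?_, ?_, ?_, ?_, ?_, ?_⟩
  · rw [diracZ, Finsupp.prod_zero_index]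
  · intro I hI p hp
    rw [riesz_diracZ, map_mul, map_pow]
    have hE : (0:ℝ) ≤ eval pt (eI I) := by
      rw [eI, map_prod]
      refine Finset.prod_nonneg fun q _ => ?_
      rw [eval_X]
      exact hptn q
    positivity
  · intro i α β hα hβ
    rw [riesz_diracZ, map_mul, map_mul, eval_pt_rowPoly hν.2, zero_mul, zero_mul]
  · intro j α β hα hβ
    rw [riesz_diracZ, map_mul, map_mul, eval_pt_colPoly hμ.2, zero_mul, zero_mul]
  · intro i1 i2 j α β hα hβ
    rw [riesz_diracZ, map_mul, map_mul, map_mul, eval_pt_rowPoly hν.2, zero_mul,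
      zero_mul, zero_mul]
  · intro j1 j2 i α β hα hβ
    rw [riesz_diracZ, map_mul, map_mul, map_mul, eval_pt_colPoly hμ.2, zero_mul,
      zero_mul, zero_mul]

end feas

section machinery
open MvPolynomial
variable {a b r : ℕ} {μ : Fin a → ℝ} {ν : Fin b → ℝ}

lemma riesz_neg {σ : Type*} (z : (σ →₀ ℕ) → ℝ) (p : MvPolynomial σ ℝ) :
    riesz z (-p) = -riesz z p := by
  have := map_neg (rieszL z) p
  simpa using this

lemma Lpoly_totalDegree_le (L : Fin a → Fin b → Fin a → Fin b → ℝ) :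
    (Lpoly a b L).totalDegree ≤ 2 := by
  rw [Lpoly]
  refine le_trans (totalDegree_finset_sum _ _) (Finset.sup_le fun i _ => ?_)
  refine le_trans (totalDegree_finset_sum _ _) (Finset.sup_le fun j _ => ?_)
  refine le_trans (totalDegree_finset_sum _ _) (Finset.sup_le fun k _ => ?_)
  refine le_trans (totalDegree_finset_sum _ _) (Finset.sup_le fun l _ => ?_)
  refine le_trans (totalDegree_mul _ _) ?_
  have h1 : (C (L i j k l) * X (i, j) : MvPolynomial (Fin a × Fin b) ℝ).totalDegree ≤ 1 := by
    refine le_trans (totalDegree_mul _ _) ?_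
    rw [totalDegree_C, totalDegree_X]
  have h2 : (X (k, l) : MvPolynomial (Fin a × Fin b) ℝ).totalDegree = 1 := totalDegree_X _
  omega

lemma InPreT_small_term (hμ2 : ∑ i, μ i = 1) {e w : ℝ} (he : 0 < e) (hw : |w| ≤ e)
    (d : (Fin a × Fin b) →₀ ℕ) (hd : mdeg d ≤ 2 * r) :
    InPreT a b r μ ν (C e + monomial d w) := by
  have heq : C e + monomial d w = C e * (1 + C (w/e) * monomial d 1) := by
    rw [mul_add, mul_one, ← mul_assoc, ← map_mul]
    rw [mul_div_cancel₀ w (ne_of_gt he)]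
    rw [MvPolynomial.C_mul_monomial, mul_one]
  rw [heq]
  refine InPreT_Cmul he.le (InPreT_one_add_small hμ2 d hd ?_)
  rw [abs_div, abs_of_pos he, div_le_one he]
  exact hw

lemma SFeas_of_coneZ (hr : 0 < r) {z : ((Fin a × Fin b) →₀ ℕ) → ℝ}
    (hzK : ∀ f, InPreT a b r μ ν f → 0 ≤ riesz z f)
    (hz0 : z 0 = 1) : SFeas a b r μ ν z := by
  classical
  have hmm : ∀ (α β : (Fin a × Fin b) →₀ ℕ),
      monomial (α + β) (1:ℝ) = monomial α 1 * monomial β 1 := by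
    intro α β
    rw [monomial_mul, one_mul]
  have hzero : ∀ (g : MvPolynomial (Fin a × Fin b) ℝ),
      (∀ lam : MvPolynomial (Fin a × Fin b) ℝ, lam.totalDegree ≤ 2 * r - 1 →
        InPreT a b r μ ν (lam * g)) →
      ∀ lam : MvPolynomial (Fin a × Fin b) ℝ, lam.totalDegree ≤ 2 * r - 1 →
        riesz z (lam * g) = 0 := by
    intro g hg lam hlam
    have h1 := hzK _ (hg lam hlam)
    have h2 := hzK _ (hg (-lam) (by rw [totalDegree_neg]; exact hlam))
    rw [neg_mul, riesz_neg] at h2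
    linarith
  refine ⟨hz0, ?_, ?_, ?_, ?_, ?_⟩
  · intro I hI p hp
    refine hzK _ (InPreT_eI_sos (IsSOS_sq p) ?_)
    refine le_trans (totalDegree_mul _ _) ?_
    have h1 := eI_totalDegree (I := I)
    have h2 : (p ^ 2).totalDegree ≤ 2 * p.totalDegree := totalDegree_pow p 2
    omega
  · intro i α β hα hβ
    have hdeg : (monomial (α + β) (1:ℝ)).totalDegree ≤ 2 * r - 1 := by
      refine le_trans (deg_monomial_le _ _) ?_
      rw [← mdeg_eq_degree, mdeg_add]
      omega
    have h := hzero (rowPoly a b μ i) (fun lam hl => InPreT_row_mul i hl) _ hdeg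
    rw [hmm α β] at h
    rw [show rowPoly a b μ i * monomial α 1 * monomial β 1
      = monomial α 1 * monomial β 1 * rowPoly a b μ i from by ring]
    exact h
  · intro j α β hα hβ
    have hdeg : (monomial (α + β) (1:ℝ)).totalDegree ≤ 2 * r - 1 := by
      refine le_trans (deg_monomial_le _ _) ?_
      rw [← mdeg_eq_degree, mdeg_add]
      omega
    have h := hzero (colPoly a b ν j) (fun lam hl => InPreT_col_mul j hl) _ hdeg
    rw [hmm α β] at h
    rw [show colPoly a b ν j * monomial α 1 * monomial β 1
      = monomial α 1 * monomial β 1 * colPoly a b ν j from by ring]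
    exact h
  · intro i1 i2 j α β hα hβ
    have hdeg : (monomial (Finsupp.single (i2, j) 1 + α + β) (1:ℝ)).totalDegree
        ≤ 2 * r - 1 := by
      refine le_trans (deg_monomial_le _ _) ?_
      rw [← mdeg_eq_degree, mdeg_add, mdeg_add, mdeg_single]
      omega
    have h := hzero (rowPoly a b μ i1) (fun lam hl => InPreT_row_mul i1 hl) _ hdeg
    rw [hmm (Finsupp.single (i2, j) 1 + α) β, hmm (Finsupp.single (i2, j) 1) α] at h
    rw [show rowPoly a b μ i1 * X (i2, j) * monomial α 1 * monomial β 1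
      = monomial (Finsupp.single (i2, j) 1) 1 * monomial α 1 * monomial β 1
        * rowPoly a b μ i1 from by rw [MvPolynomial.X]; ring]
    exact h
  · intro j1 j2 i α β hα hβ
    have hdeg : (monomial (Finsupp.single (i, j2) 1 + α + β) (1:ℝ)).totalDegree
        ≤ 2 * r - 1 := by
      refine le_trans (deg_monomial_le _ _) ?_
      rw [← mdeg_eq_degree, mdeg_add, mdeg_add, mdeg_single]
      omega
    have h := hzero (colPoly a b ν j1) (fun lam hl => InPreT_col_mul j1 hl) _ hdeg
    rw [hmm (Finsupp.single (i, j2) 1 + α) β, hmm (Finsupp.single (i, j2) 1) α] at h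
    rw [show colPoly a b ν j1 * X (i, j2) * monomial α 1 * monomial β 1
      = monomial (Finsupp.single (i, j2) 1) 1 * monomial α 1 * monomial β 1
        * colPoly a b ν j1 from by rw [MvPolynomial.X]; ring]
    exact h

noncomputable def PhiMap (a b r : ℕ) :
    MvPolynomial (Fin a × Fin b) ℝ →ₗ[ℝ] (((Fin a × Fin b) → Fin (2 * r + 1)) → ℝ) where
  toFun p := fun f => MvPolynomial.coeff (Finsupp.equivFunOnFinite.symm (fun q => ((f q : ℕ)))) p
  map_add' p q := by
    funext f
    simp [MvPolynomial.coeff_add]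
  map_smul' c p := by
    funext f
    simp [MvPolynomial.coeff_smul]

lemma PhiMap_apply (p : MvPolynomial (Fin a × Fin b) ℝ) (f : (Fin a × Fin b) → Fin (2 * r + 1)) :
    PhiMap a b r p f = MvPolynomial.coeff (Finsupp.equivFunOnFinite.symm (fun q => ((f q : ℕ)))) p :=
  rfl

lemma PhiMap_coeff {d : (Fin a × Fin b) →₀ ℕ} (hd : ∀ q, d q ≤ 2 * r)
    (p : MvPolynomial (Fin a × Fin b) ℝ) :
    PhiMap a b r p (fun q => (⟨d q, by have := hd q; omega⟩ : Fin (2 * r + 1)))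
      = MvPolynomial.coeff d p := by
  rw [PhiMap_apply]
  congr 1
  ext q
  rw [Finsupp.coe_equivFunOnFinite_symm]

lemma exps_le_of_mdeg_le {d : (Fin a × Fin b) →₀ ℕ} {k : ℕ} (h : mdeg d ≤ k) (q : Fin a × Fin b) :
    d q ≤ k := by
  have := Finsupp.le_degree q d
  rw [← mdeg_eq_degree] at this
  omega

end machinery

set_option maxHeartbeats 1000000 in
/-- Strong duality for the Schmüdgen-type hierarchy of the discrete
Gromov-Wasserstein problem: lb(L, T(Π(μ,ν)))_r = val(S-DGW-r). -/
theorem stmt3 (m n r : ℕ) (hm : 0 < m) (hn : 0 < n) (hr : 0 < r)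
    (μ : Fin m → ℝ) (ν : Fin n → ℝ) (hμ : IsProbVec μ) (hν : IsProbVec ν)
    (L : Fin m → Fin n → Fin m → Fin n → ℝ) :
    lbS m n r μ ν L = valS m n r μ ν L := by
  classical
  rw [lbS, valS]
  set Bset : Set ℝ := {v : ℝ | ∃ z, SFeas m n r μ ν z ∧ v = objS m n L z} with hBdef
  set Aset : Set ℝ := {c : ℝ | InPreT m n r μ ν (Lpoly m n L - C c)} with hAdef
  have hBne : Bset.Nonempty :=
    ⟨objS m n L (diracZ (fun q : Fin m × Fin n => μ q.1 * ν q.2)),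
      ⟨_, SFeas_diracZ hμ hν, rfl⟩⟩
  have hBbdd : BddBelow Bset := by
    refine ⟨-(∑ i, ∑ j, ∑ k, ∑ l, |L i j k l|), ?_⟩
    rintro w ⟨z, hz, rfl⟩
    exact SFeas_objS_lower hr hμ L hz
  set v : ℝ := sInf Bset with hvdef
  have hweak : ∀ c ∈ Aset, c ≤ v := by
    intro c hc
    refine le_csInf hBne ?_
    rintro w ⟨z, hz, rfl⟩
    have h := riesz_nonneg_of_InPreT hr hz hc
    rw [riesz_sub, riesz_Lpoly, riesz_C, hz.1, mul_one] at h
    linarith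
  have hstrong : ∀ c : ℝ, c < v → c ∈ Aset := by
    intro c hc
    set K' : Set (((Fin m × Fin n) → Fin (2 * r + 1)) → ℝ) :=
      (PhiMap m n r) '' {f | InPreT m n r μ ν f} with hK'def
    have hKconv : Convex ℝ {f : MvPolynomial (Fin m × Fin n) ℝ | InPreT m n r μ ν f} := by
      intro x hx y hy s t hs ht hst
      have hadd := InPreT_add (InPreT_Cmul hs hx) (InPreT_Cmul ht hy)
      rwa [← smul_eq_C_mul, ← smul_eq_C_mul] at hadd
    have hK'conv : Convex ℝ K' := hKconv.linear_image (PhiMap m n r)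
    -- Step A : closure membership
    have hx0 : (PhiMap m n r) (Lpoly m n L - C v) ∈ closure K' := by
      by_contra hx
      obtain ⟨g, u, hgu, hux⟩ :=
        geometric_hahn_banach_closed_point (hK'conv.closure) isClosed_closure hx
      have h0K : (0 : ((Fin m × Fin n) → Fin (2 * r + 1)) → ℝ) ∈ K' :=
        ⟨0, InPreT_zero, map_zero _⟩
      have hu0 : 0 < u := by
        have := hgu 0 (subset_closure h0K)
        simpa using this
      have hgneg : ∀ f, InPreT m n r μ ν f → g ((PhiMap m n r) f) ≤ 0 := by
        intro f hf
        by_contra hpos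
        push_neg at hpos
        have ht : ∀ t : ℝ, 0 ≤ t → t * g ((PhiMap m n r) f) < u := by
          intro t ht0
          have hmem : t • ((PhiMap m n r) f) ∈ K' := by
            refine ⟨C t * f, InPreT_Cmul ht0 hf, ?_⟩
            rw [← smul_eq_C_mul, map_smul]
          have := hgu _ (subset_closure hmem)
          rwa [map_smul, smul_eq_mul] at this
        have h1 := ht ((u + 1) / g ((PhiMap m n r) f))
          (le_of_lt (div_pos (by linarith) hpos))
        rw [div_mul_cancel₀ _ (ne_of_gt hpos)] at h1
        linarith
      set z : ((Fin m × Fin n) →₀ ℕ) → ℝ :=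
        fun α => -(g ((PhiMap m n r) (monomial α 1))) with hzdef
      have hzr : ∀ p : MvPolynomial (Fin m × Fin n) ℝ,
          riesz z p = -(g ((PhiMap m n r) p)) := by
        intro p
        rw [riesz]
        have hterm : ∀ α ∈ p.support, MvPolynomial.coeff α p * z α
            = -(g ((PhiMap m n r) (monomial α (MvPolynomial.coeff α p)))) := by
          intro α _
          have hmono : (monomial α (MvPolynomial.coeff α p))
              = (MvPolynomial.coeff α p) • monomial α (1:ℝ) := by
            rw [MvPolynomial.smul_monomial, smul_eq_mul, mul_one]
          rw [hmono, map_smul, map_smul, smul_eq_mul]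
          simp only [hzdef]
          ring
        rw [Finset.sum_congr rfl hterm, Finset.sum_neg_distrib]
        congr 1
        rw [← map_sum, ← map_sum, support_sum_monomial_coeff]
      have hzK : ∀ f, InPreT m n r μ ν f → 0 ≤ riesz z f := by
        intro f hf
        rw [hzr]
        have := hgneg f hf
        linarith
      have hz0 : 0 ≤ z 0 := by
        have h1 := hzK 1 (InPreT_sos IsSOS_one (by rw [totalDegree_one]; omega))
        have h2 : riesz z (1 : MvPolynomial (Fin m × Fin n) ℝ) = z 0 := by
          rw [← MvPolynomial.C_1, riesz_C, one_mul]
        rwa [h2] at h1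
      have hfinal : 0 ≤ riesz z (Lpoly m n L - C v) := by
        rcases lt_or_eq_of_le hz0 with hpos | hzeq
        · -- z 0 > 0 : rescale to a feasible moment sequence
          set z' : ((Fin m × Fin n) →₀ ℕ) → ℝ := fun α => (z 0)⁻¹ * z α with hz'def
          have hz'K : ∀ f, InPreT m n r μ ν f → 0 ≤ riesz z' f := by
            intro f hf
            rw [hz'def, riesz_scale]
            exact mul_nonneg (inv_nonneg.mpr hz0) (hzK f hf)
          have hz'0 : z' 0 = 1 := by
            rw [hz'def]
            exact inv_mul_cancel₀ (ne_of_gt hpos)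
          have hfeas := SFeas_of_coneZ hr hz'K hz'0
          have hvle : v ≤ objS m n L z' := csInf_le hBbdd ⟨z', hfeas, rfl⟩
          have hobj : objS m n L z' = (z 0)⁻¹ * riesz z (Lpoly m n L) := by
            rw [← riesz_Lpoly, hz'def, riesz_scale]
          rw [riesz_sub, riesz_C]
          have hvz : v * z 0 ≤ riesz z (Lpoly m n L) := by
            rw [hobj] at hvle
            have hinv : (z 0) * ((z 0)⁻¹ * riesz z (Lpoly m n L))
                = riesz z (Lpoly m n L) := by
              field_simp
            have h5 : z 0 * v ≤ z 0 * ((z 0)⁻¹ * riesz z (Lpoly m n L)) :=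
              mul_le_mul_of_nonneg_left hvle (le_of_lt hpos)
            rw [hinv] at h5
            calc v * z 0 = z 0 * v := mul_comm _ _
              _ ≤ riesz z (Lpoly m n L) := h5
          linarith
        · -- z 0 = 0 : degree-two moments vanish
          have h1z : ∀ q : Fin m × Fin n, 0 ≤ z (Finsupp.single q 1) := by
            intro q
            have hmem := InPreT_eI_sos (μ := μ) (ν := ν) (r := r) (I := {q}) IsSOS_one
              (by rw [mul_one, eI_totalDegree, Finset.card_singleton]; omega)
            have := hzK _ hmem
            rwa [mul_one, eI_singleton, riesz_X] at this
          have h2z : ∀ q q' : Fin m × Fin n,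
              0 ≤ z (Finsupp.single q 1 + Finsupp.single q' 1) := by
            intro q q'
            rcases eq_or_ne q q' with hqq | hqq
            · subst hqq
              have hdeg : ((X q : MvPolynomial (Fin m × Fin n) ℝ) ^ 2).totalDegree
                  ≤ 2 * r := by
                refine le_trans (totalDegree_pow _ _) ?_
                rw [totalDegree_X]
                omega
              have := hzK _ (InPreT_sos (IsSOS_sq (X q)) hdeg)
              rwa [pow_two, riesz_X_mul_X] at this
            · have hmem := InPreT_eI_sos (μ := μ) (ν := ν) (r := r) (I := {q, q'}) IsSOS_one
                (by
                  rw [mul_one, eI_totalDegree]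
                  refine le_trans (Finset.card_insert_le _ _) ?_
                  rw [Finset.card_singleton]
                  omega)
              have := hzK _ hmem
              rwa [mul_one, eI_pair hqq, riesz_X_mul_X] at this
          have hrow0 : ∀ i, riesz z (rowPoly m n μ i) = 0 := by
            intro i
            have hp := hzK _ (InPreT_row_mul (μ := μ) (ν := ν) i (lam := 1)
              (by rw [totalDegree_one]; omega))
            have hq := hzK _ (InPreT_row_mul (μ := μ) (ν := ν) i (lam := -1)
              (by rw [totalDegree_neg, totalDegree_one]; omega))
            rw [one_mul] at hp
            rw [neg_one_mul, riesz_neg] at hq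
            linarith
          have hrowX0 : ∀ i (kl : Fin m × Fin n),
              riesz z (rowPoly m n μ i * X kl) = 0 := by
            intro i kl
            have hdX : (X kl : MvPolynomial (Fin m × Fin n) ℝ).totalDegree ≤ 2 * r - 1 := by
              rw [totalDegree_X]; omega
            have hp := hzK _ (InPreT_row_mul (μ := μ) (ν := ν) i (lam := X kl) hdX)
            have hq := hzK _ (InPreT_row_mul (μ := μ) (ν := ν) i (lam := -(X kl))
              (by rw [totalDegree_neg]; exact hdX))
            rw [neg_mul, riesz_neg] at hq
            rw [mul_comm]
            linarith
          have hsing : ∀ q : Fin m × Fin n, z (Finsupp.single q 1) = 0 := by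
            intro q
            have hs := hrow0 q.1
            rw [riesz_rowPoly, ← hzeq, mul_zero, sub_zero] at hs
            have := (Finset.sum_eq_zero_iff_of_nonneg
              (fun j _ => h1z (q.1, j))).mp hs q.2 (Finset.mem_univ q.2)
            simpa using this
          have hpair : ∀ q q' : Fin m × Fin n,
              z (Finsupp.single q 1 + Finsupp.single q' 1) = 0 := by
            intro q q'
            have hs := hrowX0 q.1 q'
            rw [riesz_rowPoly_mul_X, hsing q', mul_zero, sub_zero] at hs
            have := (Finset.sum_eq_zero_iff_of_nonneg
              (fun j _ => h2z (q.1, j) q')).mp hs q.2 (Finset.mem_univ q.2)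
            simpa using this
          rw [riesz_sub, riesz_Lpoly, riesz_C, ← hzeq, mul_zero, sub_zero, objS]
          refine le_of_eq (Finset.sum_eq_zero fun i _ => Finset.sum_eq_zero fun j _ =>
            Finset.sum_eq_zero fun k _ => Finset.sum_eq_zero fun l _ => ?_).symm
          rw [hpair (i, j) (k, l), mul_zero]
      rw [hzr] at hfinal
      linarith
    -- Step B : approximation and explicit membership
    have hε : 0 < v - c := by linarith
    set N := Fintype.card ((Fin m × Fin n) → Fin (2 * r + 1)) with hNdef
    have hN : 0 < N := Fintype.card_pos
    obtain ⟨y, hyK', hdist⟩ := Metric.mem_closure_iff.mp hx0 ((v - c) / (2 * N))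
      (by positivity)
    obtain ⟨h, hhK, rfl⟩ := hyK'
    set Δ : MvPolynomial (Fin m × Fin n) ℝ := Lpoly m n L - C v - h with hΔdef
    have hhdeg : h.totalDegree ≤ 2 * r := InPreT_deg_le hr hhK
    have hΔdeg : Δ.totalDegree ≤ 2 * r := by
      rw [hΔdef]
      refine le_trans (totalDegree_sub_le _ _)
        (max_le (le_trans (totalDegree_sub_le _ _) (max_le ?_ ?_)) hhdeg)
      · exact le_trans (Lpoly_totalDegree_le L) (by omega)
      · rw [totalDegree_C]; omega
    have hΔcoeff : ∀ d ∈ Δ.support, |MvPolynomial.coeff d Δ| ≤ (v - c) / (2 * N) := by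
      intro d hd
      have hmd : mdeg d ≤ 2 * r := le_trans (MvPolynomial.le_totalDegree hd) hΔdeg
      have hexp := exps_le_of_mdeg_le hmd
      have hc1 : MvPolynomial.coeff d Δ
          = (PhiMap m n r Δ) (fun q => (⟨d q, by have := hexp q; omega⟩ : Fin (2 * r + 1))) :=
        (PhiMap_coeff hexp Δ).symm
      have hc2 : PhiMap m n r Δ = PhiMap m n r (Lpoly m n L - C v) - PhiMap m n r h := by
        rw [hΔdef, map_sub]
      have hnorm : ‖PhiMap m n r (Lpoly m n L - C v) - PhiMap m n r h‖ < (v - c) / (2 * N) := by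
        rw [← dist_eq_norm]
        exact hdist
      have hcoord := norm_le_pi_norm (PhiMap m n r (Lpoly m n L - C v) - PhiMap m n r h)
        (fun q => (⟨d q, by have := hexp q; omega⟩ : Fin (2 * r + 1)))
      rw [Real.norm_eq_abs] at hcoord
      rw [hc1, hc2]
      have : ((PhiMap m n r (Lpoly m n L - C v) - PhiMap m n r h)
          (fun q => (⟨d q, by have := hexp q; omega⟩ : Fin (2 * r + 1))))
          = (PhiMap m n r (Lpoly m n L - C v) - PhiMap m n r h)
          (fun q => (⟨d q, by have := hexp q; omega⟩ : Fin (2 * r + 1))) := rfl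
      calc |(PhiMap m n r (Lpoly m n L - C v) - PhiMap m n r h)
            (fun q => (⟨d q, by have := hexp q; omega⟩ : Fin (2 * r + 1)))|
          ≤ ‖PhiMap m n r (Lpoly m n L - C v) - PhiMap m n r h‖ := hcoord
        _ ≤ (v - c) / (2 * N) := le_of_lt hnorm
    have hKc : InPreT m n r μ ν (C (v - c) + Δ) := by
      rcases eq_or_ne Δ 0 with h0 | h0
      · rw [h0, add_zero]
        exact InPreT_sos (IsSOS_C hε.le) (by rw [totalDegree_C]; omega)
      · set S := Δ.support with hSdef
        have hSne : S.Nonempty := by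
          rw [hSdef, Finset.nonempty_iff_ne_empty, Ne, support_eq_empty]
          exact h0
        set n0 := S.card with hn0def
        have hn0 : 0 < n0 := Finset.card_pos.mpr hSne
        have hn0N : n0 ≤ N := by
          rw [hn0def, hNdef]
          have : S.card ≤ (Finset.univ : Finset ((Fin m × Fin n) → Fin (2 * r + 1))).card := by
            refine Finset.card_le_card_of_injOn
              (fun d => (fun q => (⟨min (d q) (2 * r), by omega⟩ : Fin (2 * r + 1))))
              (fun _ _ => Finset.mem_univ _) ?_
            intro d hd d' hd' heq
            have hmd : mdeg d ≤ 2 * r :=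
              le_trans (MvPolynomial.le_totalDegree (by rwa [hSdef] at hd)) hΔdeg
            have hmd' : mdeg d' ≤ 2 * r :=
              le_trans (MvPolynomial.le_totalDegree (by rwa [hSdef] at hd')) hΔdeg
            ext q
            have h1 := congrFun heq q
            have h2 : min (d q) (2 * r) = min (d' q) (2 * r) := by
              have := congrArg Fin.val h1
              simpa using this
            have hdq := exps_le_of_mdeg_le hmd q
            have hdq' := exps_le_of_mdeg_le hmd' q
            omega
          rwa [Finset.card_univ] at this
        have hcard : ∀ d ∈ S, |MvPolynomial.coeff d Δ| ≤ (v - c) / n0 := by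
          intro d hd
          have h1 := hΔcoeff d (by rwa [hSdef] at hd)
          have h2 : (v - c) / (2 * N) ≤ (v - c) / n0 := by
            refine div_le_div_of_nonneg_left hε.le ?_ ?_
            · exact_mod_cast hn0
            · exact_mod_cast by omega
          linarith
        have hsplit : C (v - c) + Δ
            = ∑ d ∈ S, (C ((v - c) / n0) + monomial d (MvPolynomial.coeff d Δ)) := by
          rw [Finset.sum_add_distrib, Finset.sum_const]
          have hconst : n0 • (C ((v - c) / n0) : MvPolynomial (Fin m × Fin n) ℝ)
              = C (v - c) := by
            rw [nsmul_eq_mul, ← map_natCast (C : ℝ →+* MvPolynomial (Fin m × Fin n) ℝ) n0,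
              ← map_mul]
            congr 1
            field_simp
          rw [hconst, hSdef, support_sum_monomial_coeff]
        rw [hsplit]
        refine Finset.sum_induction _ (InPreT m n r μ ν)
          (fun x y hx hy => InPreT_add hx hy) InPreT_zero ?_
        intro d hd
        refine InPreT_small_term hμ.2 (by positivity) (hcard d hd) d ?_
        exact le_trans (MvPolynomial.le_totalDegree (by rwa [hSdef] at hd)) hΔdeg
    have hfin : Lpoly m n L - C c = h + (C (v - c) + Δ) := by
      rw [hΔdef, map_sub]
      ring
    rw [hAdef]
    simp only [Set.mem_setOf_eq]
    rw [hfin]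
    exact InPreT_add hhK hKc
  have hAbdd : BddAbove Aset := ⟨v, fun c hc => hweak c hc⟩
  have hAne : Aset.Nonempty := ⟨v - 1, hstrong _ (by linarith)⟩
  refine le_antisymm (csSup_le hAne hweak) ?_
  by_contra hlt
  push_neg at hlt
  have h2 := hstrong ((sSup Aset + v) / 2) (by linarith)
  have h3 := le_csSup hAbdd h2
  linarith
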